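/- arXiv:1309.6095 — 6 statements merged into one kernel-verified Lean document; each statement's English description precedes it below -/
import Mathlib

section
/- Let G be a locally compact second countable group with a left Reiter sequence (F_m), and let g ↦ u_g be a bounded measurable function from G to a Hilbert space H. Then limsup_m ‖∫ u_g dF_m(g)‖² ≤ inf over probability Radon measures P on G of limsup_m ∫∫∫ ⟨u_{hg}, u_{lg}⟩ dP(h) dP(l) dF_m(g). -/
open MeasureTheory Filter Topology
open scoped RealInnerProductSpace

/-- Total variation distance between two (finite) measures. -/
noncomputable def tvDist {G : Type*} [MeasurableSpace G] (μ ν : Measure G) : ENNReal :=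
  ⨆ (s : Set G) (_ : MeasurableSet s), (μ s - ν s) + (ν sᶜ - μ sᶜ)

/-- Left Reiter sequence: `‖h ∗ F_N - F_N‖ → 0` for every probability Radon measure `h`. -/
def IsLeftReiter {G : Type*} [Group G] [MeasurableSpace G] (F : ℕ → Measure G) : Prop :=
  (∀ N, IsProbabilityMeasure (F N)) ∧
    ∀ h : Measure G, IsProbabilityMeasure h →
      Tendsto (fun N => tvDist ((h.mconv (F N))) (F N)) atTop (𝓝 0)

section Aux

variable {α : Type*} [MeasurableSpace α]

lemma integrable_of_bdd {E : Type*} [NormedAddCommGroup E] {μ : Measure α} [IsFiniteMeasure μ]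
    {f : α → E} (hf : StronglyMeasurable f) {C : ℝ} (h : ∀ x, ‖f x‖ ≤ C) : Integrable f μ :=
  ⟨hf.aestronglyMeasurable, HasFiniteIntegral.of_bounded (ae_of_all μ h)⟩

lemma tvDist_ne_top (μ ν : Measure α) [IsFiniteMeasure μ] [IsFiniteMeasure ν] :
    tvDist μ ν ≠ ⊤ := by
  have hle : tvDist μ ν ≤ μ Set.univ + ν Set.univ := by
    refine iSup₂_le fun s hs => add_le_add
      (tsub_le_self.trans (measure_mono (Set.subset_univ _)))
      (tsub_le_self.trans (measure_mono (Set.subset_univ _)))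
  exact ne_top_of_le_ne_top (ENNReal.add_ne_top.2 ⟨measure_ne_top μ _, measure_ne_top ν _⟩) hle

lemma norm_integral_sub_integral_le {H : Type*} [NormedAddCommGroup H] [NormedSpace ℝ H]
    (μ ν : Measure α) [IsFiniteMeasure μ] [IsFiniteMeasure ν]
    {f : α → H} (hf : StronglyMeasurable f) {C : ℝ} (hC0 : 0 ≤ C) (hfC : ∀ x, ‖f x‖ ≤ C) :
    ‖(∫ x, f x ∂μ) - ∫ x, f x ∂ν‖ ≤ C * (tvDist μ ν).toReal := by
  obtain ⟨s, hs, h₁, h₂⟩ := MeasureTheory.hahn_decomposition (μ := μ) (ν := ν)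
  have hνμ : ν.restrict s ≤ μ.restrict s := by
    refine Measure.le_iff.2 fun t ht => ?_
    rw [Measure.restrict_apply ht, Measure.restrict_apply ht]
    exact h₁ _ (ht.inter hs) Set.inter_subset_right
  have hμν : μ.restrict sᶜ ≤ ν.restrict sᶜ := by
    refine Measure.le_iff.2 fun t ht => ?_
    rw [Measure.restrict_apply ht, Measure.restrict_apply ht]
    exact h₂ _ (ht.inter hs.compl) Set.inter_subset_right
  set δ := μ.restrict s - ν.restrict s with hδdef
  set ε := ν.restrict sᶜ - μ.restrict sᶜ with hεdef
  haveI : IsFiniteMeasure δ := isFiniteMeasure_of_le _ Measure.sub_le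
  haveI : IsFiniteMeasure ε := isFiniteMeasure_of_le _ Measure.sub_le
  have hint : ∀ (ρ : Measure α) [IsFiniteMeasure ρ], Integrable f ρ :=
    fun ρ _ => integrable_of_bdd hf hfC
  have hδadd : δ + ν.restrict s = μ.restrict s := Measure.sub_add_cancel_of_le hνμ
  have hεadd : ε + μ.restrict sᶜ = ν.restrict sᶜ := Measure.sub_add_cancel_of_le hμν
  have e1 : ∫ x, f x ∂(μ.restrict s) = (∫ x, f x ∂δ) + ∫ x, f x ∂(ν.restrict s) := by
    rw [← hδadd, integral_add_measure (hint _) (hint _)]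
  have e2 : ∫ x, f x ∂(ν.restrict sᶜ) = (∫ x, f x ∂ε) + ∫ x, f x ∂(μ.restrict sᶜ) := by
    rw [← hεadd, integral_add_measure (hint _) (hint _)]
  have e3 : ∫ x, f x ∂μ = (∫ x, f x ∂(μ.restrict s)) + ∫ x, f x ∂(μ.restrict sᶜ) :=
    (integral_add_compl hs (hint μ)).symm
  have e4 : ∫ x, f x ∂ν = (∫ x, f x ∂(ν.restrict s)) + ∫ x, f x ∂(ν.restrict sᶜ) :=
    (integral_add_compl hs (hint ν)).symm
  have key : (∫ x, f x ∂μ) - ∫ x, f x ∂ν = (∫ x, f x ∂δ) - ∫ x, f x ∂ε := by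
    rw [e3, e4, e1, e2]; abel
  have hδu : δ Set.univ = μ s - ν s := by
    rw [hδdef, Measure.sub_apply MeasurableSet.univ hνμ]
    simp [Measure.restrict_apply_univ]
  have hεu : ε Set.univ = ν sᶜ - μ sᶜ := by
    rw [hεdef, Measure.sub_apply MeasurableSet.univ hμν]
    simp [Measure.restrict_apply_univ]
  have hbound : ‖(∫ x, f x ∂δ) - ∫ x, f x ∂ε‖ ≤
      C * (δ Set.univ).toReal + C * (ε Set.univ).toReal :=
    (norm_sub_le _ _).trans (add_le_add
      (norm_integral_le_of_norm_le_const (ae_of_all _ hfC))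
      (norm_integral_le_of_norm_le_const (ae_of_all _ hfC)))
  rw [key]
  refine hbound.trans ?_
  rw [← mul_add, ← ENNReal.toReal_add (measure_ne_top _ _) (measure_ne_top _ _)]
  refine mul_le_mul_of_nonneg_left (ENNReal.toReal_mono (tvDist_ne_top μ ν) ?_) hC0
  rw [hδu, hεu]
  show _ ≤ ⨆ (t : Set α) (_ : MeasurableSet t), (μ t - ν t) + (ν tᶜ - μ tᶜ)
  exact le_iSup₂_of_le s hs le_rfl

end Aux

/-- Van der Corput lemma: for a bounded measurable Hilbert-space-valued function `u`
on a lcsc group with a left Reiter sequence `F`, and for every probability Radon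
measure `P`,
`limsup_m ‖∫ u_g dF_m(g)‖² ≤ limsup_m ∫∫∫ ⟨u_{hg}, u_{lg}⟩ dP(h) dP(l) dF_m(g)`;
i.e. the left-hand side is at most the infimum of the right-hand side over all `P`. -/
theorem van_der_corput {G : Type*} [Group G] [TopologicalSpace G] [IsTopologicalGroup G]
    [LocallyCompactSpace G] [SecondCountableTopology G] [MeasurableSpace G] [BorelSpace G]
    {H : Type*} [NormedAddCommGroup H] [InnerProductSpace ℝ H] [CompleteSpace H]
    (F : ℕ → Measure G) (hF : IsLeftReiter F)
    (u : G → H) (hu : StronglyMeasurable u) (C : ℝ) (huC : ∀ g, ‖u g‖ ≤ C)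
    (P : Measure G) (hP : IsProbabilityMeasure P) :
    limsup (fun m => ‖∫ g, u g ∂(F m)‖ ^ 2) atTop ≤
      limsup (fun m => ∫ g, ∫ l, ∫ h, ⟪u (h * g), u (l * g)⟫ ∂P ∂P ∂(F m)) atTop := by
  classical
  haveI := hP
  obtain ⟨hFprob, hFlim⟩ := hF
  have hC0 : 0 ≤ C := (norm_nonneg _).trans (huC 1)
  have hmul : StronglyMeasurable fun p : G × G => u (p.1 * p.2) :=
    hu.comp_measurable measurable_mul
  set v : G → H := fun g => ∫ h, u (h * g) ∂P with hvdef
  have hv_meas : StronglyMeasurable v := hmul.integral_prod_left'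
  have hv_bdd : ∀ g, ‖v g‖ ≤ C := fun g => by
    have := norm_integral_le_of_norm_le_const (μ := P) (f := fun h => u (h * g))
      (ae_of_all _ fun h => huC _)
    simpa using this
  have hinner_bdd : ∀ x y : G, ‖(⟪u x, u y⟫ : ℝ)‖ ≤ C * C := fun x y => by
    rw [Real.norm_eq_abs]
    exact (abs_real_inner_le_norm _ _).trans
      (mul_le_mul (huC x) (huC y) (norm_nonneg _) hC0)
  -- bound for the single inner integral
  have hin1 : ∀ g l : G, ‖∫ h, (⟪u (h * g), u (l * g)⟫ : ℝ) ∂P‖ ≤ C * C := fun g l => by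
    have := norm_integral_le_of_norm_le_const (μ := P)
      (f := fun h => (⟪u (h * g), u (l * g)⟫ : ℝ)) (ae_of_all _ fun h => hinner_bdd _ _)
    simpa using this
  have hin2 : ∀ g : G, ‖∫ l, ∫ h, (⟪u (h * g), u (l * g)⟫ : ℝ) ∂P ∂P‖ ≤ C * C := fun g => by
    have := norm_integral_le_of_norm_le_const (μ := P)
      (f := fun l => ∫ h, (⟪u (h * g), u (l * g)⟫ : ℝ) ∂P) (ae_of_all _ fun l => hin1 g l)
    simpa using this
  set a : ℕ → ℝ := fun m => ‖∫ g, u g ∂(F m)‖ ^ 2 with hadef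
  set c : ℕ → ℝ := fun m => ∫ g, ∫ l, ∫ h, (⟪u (h * g), u (l * g)⟫ : ℝ) ∂P ∂P ∂(F m) with hcdef
  set t : ℕ → ℝ := fun m => (tvDist (P.mconv (F m)) (F m)).toReal with htdef
  -- the key pointwise estimate
  have key : ∀ m, a m ≤ c m + C * t m * (2 * C) := by
    intro m
    haveI := hFprob m
    set μ := F m with hμdef
    haveI : IsFiniteMeasure (P.mconv μ) := Measure.finite_of_finite_mconv P μ
    have hprod_int : Integrable (fun p : G × G => u (p.1 * p.2)) (P.prod μ) :=
      integrable_of_bdd hmul fun p => huC _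
    -- the convolved integral equals the integral of `v`
    have hy : ∫ g, u g ∂(P.mconv μ) = ∫ g, v g ∂μ := by
      rw [Measure.mconv, integral_map measurable_mul.aemeasurable hu.aestronglyMeasurable]
      calc ∫ p : G × G, u (p.1 * p.2) ∂(P.prod μ)
          = ∫ h, ∫ g, u (h * g) ∂μ ∂P := integral_prod _ hprod_int
        _ = ∫ g, ∫ h, u (h * g) ∂P ∂μ := integral_integral_swap hprod_int
    set I := ∫ g, v g ∂μ with hIdef
    have hv_int : Integrable v μ := integrable_of_bdd hv_meas hv_bdd
    have hvsq_meas : StronglyMeasurable fun g => ‖v g‖ ^ 2 :=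
      (continuous_pow 2).comp_stronglyMeasurable hv_meas.norm
    have hvsq_int : Integrable (fun g => ‖v g‖ ^ 2) μ := by
      refine integrable_of_bdd hvsq_meas (C := C ^ 2) fun g => ?_
      rw [Real.norm_eq_abs, abs_of_nonneg (sq_nonneg _)]
      exact pow_le_pow_left₀ (norm_nonneg _) (hv_bdd g) 2
    have hinner_int : Integrable (fun g => (⟪I, v g⟫ : ℝ)) μ := hv_int.const_inner I
    have hIinner : ∫ g, (⟪I, v g⟫ : ℝ) ∂μ = ‖I‖ ^ 2 := by
      rw [integral_inner hv_int, ← hIdef, real_inner_self_eq_norm_sq]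
    -- Jensen: ‖I‖² ≤ ∫ ‖v‖²
    have hjensen : ‖I‖ ^ 2 ≤ ∫ g, ‖v g‖ ^ 2 ∂μ := by
      have h0 : (0 : ℝ) ≤ ∫ g, ‖v g - I‖ ^ 2 ∂μ := integral_nonneg fun g => sq_nonneg _
      have hexp : ∫ g, ‖v g - I‖ ^ 2 ∂μ = (∫ g, ‖v g‖ ^ 2 ∂μ) - ‖I‖ ^ 2 := by
        have hpt : ∀ g, ‖v g - I‖ ^ 2 = ‖v g‖ ^ 2 - 2 * (⟪I, v g⟫ : ℝ) + ‖I‖ ^ 2 := fun g => by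
          rw [norm_sub_sq_real, real_inner_comm]
        have h2int : Integrable (fun g => 2 * (⟪I, v g⟫ : ℝ)) μ := hinner_int.const_mul 2
        have hsubint : Integrable (fun g => ‖v g‖ ^ 2 - 2 * (⟪I, v g⟫ : ℝ)) μ :=
          hvsq_int.sub h2int
        rw [integral_congr_ae (ae_of_all _ hpt),
          integral_add hsubint (integrable_const _),
          integral_sub hvsq_int h2int, integral_const_mul, hIinner,
          integral_const]
        simp [measure_univ]
        ring
      linarith
    -- identification of ∫ ‖v‖² with the triple integral
    have hug_int : ∀ g' : G, Integrable (fun h => u (h * g')) P := fun g' =>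
      integrable_of_bdd (hu.comp_measurable (measurable_mul_const g')) fun h => huC _
    have hpoint : ∀ g, ‖v g‖ ^ 2 = ∫ l, ∫ h, (⟪u (h * g), u (l * g)⟫ : ℝ) ∂P ∂P := by
      intro g
      have e1 : ‖v g‖ ^ 2 = (⟪v g, v g⟫ : ℝ) := (real_inner_self_eq_norm_sq _).symm
      have e2 : (⟪v g, v g⟫ : ℝ) = ∫ l, (⟪v g, u (l * g)⟫ : ℝ) ∂P :=
        (integral_inner (hug_int g) (v g)).symm
      have e3 : ∀ l, (⟪v g, u (l * g)⟫ : ℝ) = ∫ h, (⟪u (h * g), u (l * g)⟫ : ℝ) ∂P := by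
        intro l
        rw [real_inner_comm, ← integral_inner (hug_int g) (u (l * g))]
        exact integral_congr_ae (ae_of_all _ fun h => real_inner_comm _ _)
      rw [e1, e2]
      exact integral_congr_ae (ae_of_all _ fun l => e3 l)
    have hc_eq : ∫ g, ‖v g‖ ^ 2 ∂μ = c m := integral_congr_ae (ae_of_all _ hpoint)
    -- total variation estimate
    have htv : ‖(∫ g, u g ∂(P.mconv μ)) - ∫ g, u g ∂μ‖ ≤ C * t m :=
      norm_integral_sub_integral_le _ _ hu hC0 huC
    set x := ∫ g, u g ∂μ with hxdef
    set y := ∫ g, u g ∂(P.mconv μ) with hydef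
    have hxC : ‖x‖ ≤ C := by
      have := norm_integral_le_of_norm_le_const (μ := μ) (ae_of_all _ huC)
      simpa using this
    have hyC : ‖y‖ ≤ C := by
      have := norm_integral_le_of_norm_le_const (μ := P.mconv μ) (ae_of_all _ huC)
      simpa using this
    have htnn : 0 ≤ C * t m := mul_nonneg hC0 ENNReal.toReal_nonneg
    have hdiff : ‖x‖ ^ 2 - ‖y‖ ^ 2 ≤ C * t m * (2 * C) := by
      have hxy : ‖x - y‖ ≤ C * t m := by rw [norm_sub_rev]; exact htv
      have h2 : ‖x‖ - ‖y‖ ≤ C * t m := (norm_sub_norm_le x y).trans hxy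
      have h3 : ‖x‖ + ‖y‖ ≤ 2 * C := by linarith
      calc ‖x‖ ^ 2 - ‖y‖ ^ 2 = (‖x‖ - ‖y‖) * (‖x‖ + ‖y‖) := by ring
        _ ≤ (C * t m) * (‖x‖ + ‖y‖) :=
            mul_le_mul_of_nonneg_right h2 (by positivity)
        _ ≤ (C * t m) * (2 * C) := mul_le_mul_of_nonneg_left h3 htnn
    have hyI : y = I := hy
    have hynorm : ‖y‖ ^ 2 ≤ c m := by rw [hyI, ← hc_eq]; exact hjensen
    have : a m = ‖x‖ ^ 2 := rfl
    rw [this]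
    linarith
  -- boundedness of `c`
  have hc_abs : ∀ m, |c m| ≤ C * C := fun m => by
    haveI := hFprob m
    have := norm_integral_le_of_norm_le_const (μ := F m)
      (f := fun g => ∫ l, ∫ h, (⟪u (h * g), u (l * g)⟫ : ℝ) ∂P ∂P)
      (ae_of_all _ fun g => hin2 g)
    simpa [Real.norm_eq_abs, measure_univ] using this
  have hc_le : ∀ m, c m ≤ C * C := fun m => (le_abs_self _).trans (hc_abs m)
  have hc_ge : ∀ m, -(C * C) ≤ c m := fun m => (abs_le.mp (hc_abs m)).1
  -- `t → 0`
  have htv0 : Tendsto t atTop (𝓝 0) := by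
    have h := hFlim P hP
    have := (ENNReal.tendsto_toReal (a := 0) (by simp)).comp h
    exact this
  have hd0 : Tendsto (fun m => C * t m * (2 * C)) atTop (𝓝 0) := by
    have := (htv0.const_mul C).mul_const (2 * C)
    simpa using this
  -- conclude with an ε-argument on limsups
  refine le_of_forall_sub_le fun ε hε => sub_le_iff_le_add.2 ?_
  have hev : ∀ᶠ m in atTop, a m ≤ c m + ε := by
    filter_upwards [hd0.eventually_lt_const hε] with m hm
    exact (key m).trans (by linarith)
  have hbdd_a : atTop.IsCoboundedUnder (· ≤ ·) a :=
    IsBoundedUnder.isCoboundedUnder_le (isBoundedUnder_of ⟨0, fun m => sq_nonneg _⟩)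
  have hbdd_cε : atTop.IsBoundedUnder (· ≤ ·) fun m => c m + ε :=
    isBoundedUnder_of ⟨C * C + ε, fun m => add_le_add_left (hc_le m) ε⟩
  have hbdd_c_above : atTop.IsBoundedUnder (· ≤ ·) c := isBoundedUnder_of ⟨C * C, hc_le⟩
  have hbdd_c_cob : atTop.IsCoboundedUnder (· ≤ ·) c :=
    IsBoundedUnder.isCoboundedUnder_le (isBoundedUnder_of ⟨-(C * C), hc_ge⟩)
  calc limsup a atTop ≤ limsup (fun m => c m + ε) atTop :=
      limsup_le_limsup hev hbdd_a hbdd_cε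
    _ = limsup c atTop + ε := limsup_add_const atTop c ε hbdd_c_above hbdd_c_cob
end

section
/- Let (X_i, 𝒳_i, μ_i), i ∈ I, be inner and outer regular Borel probability spaces on topological spaces, and let μ be a finitely additive nonnegative set function on the semiring of cylinder sets ∏_i A_i (with A_i ∈ 𝒳_i and A_i ≠ X_i for only finitely many i) satisfying μ(∏_i A_i) ≤ min_i μ_i(A_i). Then μ extends uniquely to a countably additive Borel probability measure on the product space (∏_i X_i, ⊗_i 𝒳_i). -/
open MeasureTheory Set

/-- A family `A : ∀ i, Set (X i)` is a (measurable) cylinder datum if each `A i` is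
measurable and `A i ≠ univ` for only finitely many `i`. The corresponding cylinder
set is `Set.pi univ A`. -/
def IsCylinderDatum {ι : Type*} {X : ι → Type*} [∀ i, MeasurableSpace (X i)]
    (A : ∀ i, Set (X i)) : Prop :=
  (∀ i, MeasurableSet (A i)) ∧ {i | A i ≠ Set.univ}.Finite

namespace CouplingExt

variable {ι : Type*} {X : ι → Type*} [∀ i, MeasurableSpace (X i)]

section SetLemmas

variable {A B : ∀ i, Set (X i)}

lemma datum_inter (hA : IsCylinderDatum A) (hB : IsCylinderDatum B) :
    IsCylinderDatum (fun i => A i ∩ B i) := by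
  refine ⟨fun i => (hA.1 i).inter (hB.1 i), (hA.2.union hB.2).subset ?_⟩
  intro i hi
  simp only [mem_setOf_eq, mem_union] at hi ⊢
  by_contra h
  push_neg at h
  exact hi (by rw [h.1, h.2, univ_inter])

lemma pi_univ_inter : Set.pi univ (fun i => A i ∩ B i) = Set.pi univ A ∩ Set.pi univ B := by
  ext x
  simp only [mem_pi, mem_univ, forall_true_left, mem_inter_iff, true_implies]
  exact forall_and

lemma pi_univ_mono (h : ∀ i, A i ⊆ B i) : Set.pi univ A ⊆ Set.pi univ B :=
  Set.pi_mono fun i _ => h i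

lemma disjoint_pi_univ_of_coord (j : ι) (h : Disjoint (A j) (B j)) :
    Disjoint (Set.pi univ A) (Set.pi univ B) := by
  rw [Set.disjoint_left]
  intro x hx hx'
  exact Set.disjoint_left.mp h (hx j trivial) (hx' j trivial)

lemma subset_coord_of_pi_subset (h : Set.pi univ A ⊆ Set.pi univ B)
    (hne : (Set.pi univ A).Nonempty) : ∀ i, A i ⊆ B i := by
  rcases (Set.univ_pi_subset_univ_pi_iff).mp h with h' | ⟨i, hi⟩
  · exact h'
  · exact absurd (by simp [Set.univ_pi_eq_empty hi]) hne.ne_empty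

end SetLemmas

section ListHelpers

lemma list_map_sum_get {α : Type*} (L : List α) (f : α → ENNReal) :
    (L.map f).sum = ∑ k : Fin L.length, f (L.get k) := by
  conv_lhs => rw [← List.ofFn_get L, List.map_ofFn, Fin.sum_ofFn (f ∘ L.get)]
  rfl

end ListHelpers

section Measures

variable [∀ i, TopologicalSpace (X i)] [∀ i, BorelSpace (X i)]
  (μi : ∀ i, Measure (X i)) [∀ i, IsProbabilityMeasure (μi i)]
  (μ : (∀ i, Set (X i)) → ENNReal)

section Basic

variable
  (hwd : ∀ A B : ∀ i, Set (X i), IsCylinderDatum A → IsCylinderDatum B →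
    Set.pi univ A = Set.pi univ B → μ A = μ B)
  (hdom : ∀ A : ∀ i, Set (X i), IsCylinderDatum A → ∀ i, μ A ≤ μi i (A i))
  (hadd : ∀ (A : ∀ i, Set (X i)) (n : ℕ) (B : Fin n → ∀ i, Set (X i)),
    IsCylinderDatum A → (∀ m, IsCylinderDatum (B m)) →
    Set.pi univ A = ⋃ m, Set.pi univ (B m) →
    (Pairwise fun m m' => Disjoint (Set.pi univ (B m)) (Set.pi univ (B m'))) →
    μ A = ∑ m, μ (B m))

include hdom in
lemma mu_le_one [Nonempty ι] {A : ∀ i, Set (X i)} (hA : IsCylinderDatum A) : μ A ≤ 1 := by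
  obtain ⟨i⟩ := ‹Nonempty ι›
  exact (hdom A hA i).trans prob_le_one

include hdom in
lemma mu_of_coord_empty {A : ∀ i, Set (X i)} (hA : IsCylinderDatum A) {i : ι}
    (h : A i = ∅) : μ A = 0 := by
  have := hdom A hA i
  rw [h, measure_empty] at this
  exact le_antisymm this zero_le

include hdom in
lemma mu_of_pi_empty [∀ i, Nonempty (X i)] {A : ∀ i, Set (X i)} (hA : IsCylinderDatum A)
    (h : Set.pi univ A = ∅) : μ A = 0 := by
  have : ¬ ∀ i, (A i).Nonempty := fun h' => (Set.univ_pi_nonempty_iff.mpr h').ne_empty h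
  push_neg at this
  obtain ⟨i, hi⟩ := this
  exact mu_of_coord_empty μi μ hdom hA hi

include hdom hadd in
/-- The key finite-additivity decomposition. -/
lemma exists_diff_partition
    (A B : ∀ i, Set (X i)) (hA : IsCylinderDatum A) (hB : IsCylinderDatum B)
    (hBA : ∀ i, B i ⊆ A i) (s : Finset ι)
    (hsA : ∀ i, i ∉ s → A i = univ) (hsB : ∀ i, i ∉ s → B i = univ) :
    ∃ D : List (∀ i, Set (X i)),
      (∀ p ∈ D, IsCylinderDatum p) ∧
      (∀ p ∈ D, ∀ i, p i ⊆ A i) ∧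
      D.Pairwise (fun p q => Disjoint (Set.pi univ p) (Set.pi univ q)) ∧
      (∀ p ∈ D, Disjoint (Set.pi univ p) (Set.pi univ B)) ∧
      (Set.pi univ A = Set.pi univ B ∪ ⋃ p ∈ D, Set.pi univ p) ∧
      μ A = μ B + (D.map μ).sum ∧
      (D.map μ).sum ≤ ∑ i ∈ s, μi i (A i \ B i) := by
  classical
  set n := s.card with hn
  set e : {x // x ∈ s} ≃ Fin n := s.equivFin with he
  set g : Fin n → ι := fun k => (e.symm k : ι) with hg
  have hgs : ∀ k, g k ∈ s := fun k => (e.symm k).2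
  set Dk : Fin n → ∀ j, Set (X j) := fun k j =>
    if hj : j ∈ s then
      (if (e ⟨j, hj⟩ : Fin n) < k then B j
       else if (e ⟨j, hj⟩ : Fin n) = k then A j \ B j else A j)
    else univ with hDk
  have hidx : ∀ (k : Fin n), (e ⟨g k, hgs k⟩ : Fin n) = k := by
    intro k
    have : (⟨g k, hgs k⟩ : {x // x ∈ s}) = e.symm k := Subtype.ext rfl
    rw [this, e.apply_symm_apply]
  have hDk_g : ∀ k, Dk k (g k) = A (g k) \ B (g k) := by
    intro k
    simp only [hDk, dif_pos (hgs k), hidx k]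
    simp
  have hDk_g_lt : ∀ k k' : Fin n, k < k' → Dk k' (g k) = B (g k) := by
    intro k k' hlt
    simp only [hDk, dif_pos (hgs k), hidx k, if_pos hlt]
  have hDsubA : ∀ k j, Dk k j ⊆ A j := by
    intro k j
    simp only [hDk]
    split_ifs with h1 h2 h3
    · exact hBA j
    · exact diff_subset
    · exact subset_rfl
    · rw [hsA j h1]
  have hDdatum : ∀ k, IsCylinderDatum (Dk k) := by
    intro k
    constructor
    · intro j
      simp only [hDk]
      split_ifs with h1 h2 h3
      · exact hB.1 j
      · exact (hA.1 j).diff (hB.1 j)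
      · exact hA.1 j
      · exact MeasurableSet.univ
    · refine s.finite_toSet.subset ?_
      intro j hj
      simp only [mem_setOf_eq] at hj
      by_contra hjs
      have hjs' : j ∉ s := fun h => hjs (Finset.mem_coe.mpr h)
      exact hj (by simp [hDk, dif_neg hjs'])
  have hDdisjB : ∀ k, Disjoint (Set.pi univ (Dk k)) (Set.pi univ B) := by
    intro k
    refine disjoint_pi_univ_of_coord (g k) ?_
    rw [hDk_g k]
    exact disjoint_sdiff_left
  have hDdisj : ∀ k k' : Fin n, k ≠ k' →
      Disjoint (Set.pi univ (Dk k)) (Set.pi univ (Dk k')) := by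
    have key : ∀ k k' : Fin n, k < k' →
        Disjoint (Set.pi univ (Dk k)) (Set.pi univ (Dk k')) := by
      intro k k' hlt
      refine disjoint_pi_univ_of_coord (g k) ?_
      rw [hDk_g k, hDk_g_lt k k' hlt]
      exact disjoint_sdiff_left
    intro k k' hne
    rcases lt_or_gt_of_ne hne with h | h
    · exact key k k' h
    · exact (key k' k h).symm
  have key_mem : ∀ x, x ∈ Set.pi univ A → x ∉ Set.pi univ B →
      ∃ k, x ∈ Set.pi univ (Dk k) := by
    intro x hxA hxB
    have hT : ∃ k : Fin n, x (g k) ∉ B (g k) := by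
      have hxB' : ∃ j, x j ∉ B j := by
        by_contra hc
        push_neg at hc
        exact hxB fun j _ => hc j
      obtain ⟨j, hj⟩ := hxB'
      have hjs : j ∈ s := by
        by_contra hjs
        exact hj (by rw [hsB j hjs]; trivial)
      refine ⟨e ⟨j, hjs⟩, ?_⟩
      have : g (e ⟨j, hjs⟩) = j := by
        simp only [hg]
        rw [e.symm_apply_apply]
      rw [this]
      exact hj
    set T : Finset (Fin n) := Finset.univ.filter (fun k => x (g k) ∉ B (g k)) with hT'
    have hTne : T.Nonempty := by
      obtain ⟨k, hk⟩ := hT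
      exact ⟨k, by simp [hT', hk]⟩
    set k₀ := T.min' hTne with hk₀
    refine ⟨k₀, ?_⟩
    rw [Set.mem_pi]
    intro j _
    by_cases hjs : j ∈ s
    · simp only [hDk, dif_pos hjs]
      rcases lt_trichotomy (e ⟨j, hjs⟩ : Fin n) k₀ with hlt | heq | hgt
      · rw [if_pos hlt]
        by_contra hmem
        have hgj : g (e ⟨j, hjs⟩) = j := by simp only [hg]; rw [e.symm_apply_apply]
        have : (e ⟨j, hjs⟩ : Fin n) ∈ T := by
          simp only [hT', Finset.mem_filter, Finset.mem_univ, true_and]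
          rw [hgj]
          exact hmem
        exact absurd (T.min'_le _ this) (not_le.mpr hlt)
      · rw [if_neg (by rw [heq]; exact lt_irrefl _), if_pos heq]
        refine ⟨hxA j trivial, ?_⟩
        have hmin : k₀ ∈ T := T.min'_mem hTne
        have : x (g k₀) ∉ B (g k₀) := by simpa [hT'] using hmin
        have hgj : g (e ⟨j, hjs⟩) = j := by simp only [hg]; rw [e.symm_apply_apply]
        rwa [← heq, hgj] at this
      · rw [if_neg (not_lt.mpr hgt.le), if_neg (ne_of_gt hgt)]
        exact hxA j trivial
    · have huniv : Dk k₀ j = univ := by simp [hDk, dif_neg hjs]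
      rw [huniv]
      trivial
  -- the full family for hadd
  set Fm : Fin (n + 1) → ∀ i, Set (X i) := Fin.cons B Dk with hFm
  have hFmdatum : ∀ m, IsCylinderDatum (Fm m) := by
    intro m
    induction m using Fin.cases with
    | zero => simpa [hFm] using hB
    | succ k => simpa [hFm] using hDdatum k
  have hunion : Set.pi univ A = ⋃ m, Set.pi univ (Fm m) := by
    ext x
    simp only [mem_iUnion]
    constructor
    · intro hx
      by_cases hxB : x ∈ Set.pi univ B
      · exact ⟨0, by simpa [hFm] using hxB⟩
      · obtain ⟨k, hk⟩ := key_mem x hx hxB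
        exact ⟨k.succ, by simpa [hFm] using hk⟩
    · rintro ⟨m, hm⟩
      induction m using Fin.cases with
      | zero => exact pi_univ_mono hBA (by simpa [hFm] using hm)
      | succ k => exact pi_univ_mono (hDsubA k) (by simpa [hFm] using hm)
  have hpair : Pairwise fun m m' => Disjoint (Set.pi univ (Fm m)) (Set.pi univ (Fm m')) := by
    intro m m' hne
    induction m using Fin.cases with
    | zero =>
      induction m' using Fin.cases with
      | zero => exact absurd rfl hne
      | succ k => simpa [hFm] using (hDdisjB k).symm
    | succ k =>
      induction m' using Fin.cases with
      | zero => simpa [hFm] using hDdisjB k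
      | succ k' =>
        have : k ≠ k' := fun h => hne (by rw [h])
        simpa [hFm] using hDdisj k k' this
  have hsum := hadd A (n + 1) Fm hA hFmdatum hunion hpair
  have hsum' : μ A = μ B + ∑ k : Fin n, μ (Dk k) := by
    rw [hsum, Fin.sum_univ_succ]
    simp [hFm]
  refine ⟨List.ofFn Dk, ?_, ?_, ?_, ?_, ?_, ?_, ?_⟩
  · intro p hp
    obtain ⟨k, rfl⟩ := by simpa [List.mem_ofFn] using hp
    exact hDdatum k
  · intro p hp
    obtain ⟨k, rfl⟩ := by simpa [List.mem_ofFn] using hp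
    exact hDsubA k
  · rw [List.pairwise_iff_get]
    intro a b hab
    simp only [List.get_ofFn]
    exact hDdisj _ _ (by
      intro h
      have : a = b := by
        apply Fin.ext
        have := congrArg Fin.val h
        simpa using this
      exact absurd this (ne_of_lt hab))
  · intro p hp
    obtain ⟨k, rfl⟩ := by simpa [List.mem_ofFn] using hp
    exact hDdisjB k
  · rw [hunion]
    ext x
    simp only [mem_iUnion, mem_union]
    constructor
    · rintro ⟨m, hm⟩
      induction m using Fin.cases with
      | zero => exact Or.inl (by simpa [hFm] using hm)
      | succ k =>
        exact Or.inr ⟨Dk k, by simp [List.mem_ofFn], by simpa [hFm] using hm⟩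
    · rintro (hm | hm)
      · exact ⟨0, by simpa [hFm] using hm⟩
      · obtain ⟨p, hp, hxp⟩ := hm
        obtain ⟨k, rfl⟩ := by simpa [List.mem_ofFn] using hp
        exact ⟨k.succ, by simpa [hFm] using hxp⟩
  · rw [hsum']
    congr 1
    rw [List.map_ofFn, Fin.sum_ofFn (μ ∘ Dk)]
    rfl
  · rw [List.map_ofFn, Fin.sum_ofFn (μ ∘ Dk)]
    have hle : ∀ k, (μ ∘ Dk) k ≤ μi (g k) (A (g k) \ B (g k)) := by
      intro k
      have := hdom (Dk k) (hDdatum k) (g k)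
      rwa [hDk_g k] at this
    calc ∑ k, (μ ∘ Dk) k ≤ ∑ k : Fin n, μi (g k) (A (g k) \ B (g k)) :=
          Finset.sum_le_sum fun k _ => hle k
      _ = ∑ x : {x // x ∈ s}, (fun i => μi i (A i \ B i)) (x : ι) := by
          rw [← Equiv.sum_comp e.symm (fun x : {x // x ∈ s} => (fun i => μi i (A i \ B i)) (x : ι))]
      _ = ∑ i ∈ s, μi i (A i \ B i) := Finset.sum_coe_sort s (fun i => μi i (A i \ B i))
  done

end Basic

section Packs

variable
  (hwd : ∀ A B : ∀ i, Set (X i), IsCylinderDatum A → IsCylinderDatum B →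
    Set.pi univ A = Set.pi univ B → μ A = μ B)
  (hdom : ∀ A : ∀ i, Set (X i), IsCylinderDatum A → ∀ i, μ A ≤ μi i (A i))
  (hadd : ∀ (A : ∀ i, Set (X i)) (n : ℕ) (B : Fin n → ∀ i, Set (X i)),
    IsCylinderDatum A → (∀ m, IsCylinderDatum (B m)) →
    Set.pi univ A = ⋃ m, Set.pi univ (B m) →
    (Pairwise fun m m' => Disjoint (Set.pi univ (B m)) (Set.pi univ (B m'))) →
    μ A = ∑ m, μ (B m))

/-- A "pack" of pairwise disjoint cylinders. -/
def GoodPack (L : List (∀ i, Set (X i))) : Prop :=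
  (∀ p ∈ L, IsCylinderDatum p) ∧
    L.Pairwise fun p q => Disjoint (Set.pi univ p) (Set.pi univ q)

/-- Union of the cylinders in a pack. -/
def punion (L : List (∀ i, Set (X i))) : Set (∀ i, X i) :=
  ⋃ p ∈ L, Set.pi univ p

lemma punion_nil : punion ([] : List (∀ i, Set (X i))) = ∅ := by simp [punion]

lemma punion_cons (p : ∀ i, Set (X i)) (L : List (∀ i, Set (X i))) :
    punion (p :: L) = Set.pi univ p ∪ punion L := by simp [punion]

lemma punion_append (L M : List (∀ i, Set (X i))) :
    punion (L ++ M) = punion L ∪ punion M := by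
  simp [punion, List.mem_append, Set.biUnion_union]
  ext x
  simp only [mem_iUnion, mem_union]
  constructor
  · rintro ⟨p, hp | hp, hx⟩
    · exact Or.inl ⟨p, hp, hx⟩
    · exact Or.inr ⟨p, hp, hx⟩
  · rintro (⟨p, hp, hx⟩ | ⟨p, hp, hx⟩)
    exacts [⟨p, Or.inl hp, hx⟩, ⟨p, Or.inr hp, hx⟩]

lemma mem_punion {L : List (∀ i, Set (X i))} {x : ∀ i, X i} :
    x ∈ punion L ↔ ∃ p ∈ L, x ∈ Set.pi univ p := by simp [punion]

lemma subset_punion_of_mem {L : List (∀ i, Set (X i))} {p : ∀ i, Set (X i)} (hp : p ∈ L) :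
    Set.pi univ p ⊆ punion L := fun x hx => mem_punion.mpr ⟨p, hp, hx⟩

/-- total mass of a pack -/
noncomputable def pmass (L : List (∀ i, Set (X i))) : ENNReal := (L.map μ).sum

lemma pmass_nil : pmass μ ([] : List (∀ i, Set (X i))) = 0 := rfl

lemma pmass_cons (p : ∀ i, Set (X i)) (L : List (∀ i, Set (X i))) :
    pmass μ (p :: L) = μ p + pmass μ L := by simp [pmass]

lemma pmass_append (L M : List (∀ i, Set (X i))) :
    pmass μ (L ++ M) = pmass μ L + pmass μ M := by simp [pmass]

lemma exists_pos_of_pmass_pos {L : List (∀ i, Set (X i))} (h : 0 < pmass μ L) :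
    ∃ p ∈ L, 0 < μ p := by
  by_contra hc
  push_neg at hc
  have : pmass μ L = 0 := by
    rw [pmass, List.sum_eq_zero]
    intro a ha
    obtain ⟨p, hp, rfl⟩ := List.mem_map.mp ha
    exact le_antisymm (hc p hp) zero_le
  exact absurd this (ne_of_gt h)

lemma list_sum_comm {α : Type*} (L M : List α) (f : α → α → ENNReal) :
    (L.map (fun p => (M.map (f p)).sum)).sum
      = (M.map (fun q => (L.map (fun p => f p q)).sum)).sum := by
  simp only [list_map_sum_get]
  exact Finset.sum_comm

include hadd in
lemma haddList {L : List (∀ i, Set (X i))} (hL : GoodPack L) {E : ∀ i, Set (X i)}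
    (hE : IsCylinderDatum E) (hsub : Set.pi univ E ⊆ punion L) :
    μ E = (L.map (fun p => μ (fun i => E i ∩ p i))).sum := by
  classical
  set B : Fin L.length → ∀ i, Set (X i) := fun m => fun i => E i ∩ (L.get m) i with hB
  have hBdatum : ∀ m, IsCylinderDatum (B m) :=
    fun m => datum_inter hE (hL.1 _ (L.get_mem _))
  have hBpi : ∀ m, Set.pi univ (B m) = Set.pi univ E ∩ Set.pi univ (L.get m) :=
    fun m => pi_univ_inter
  have hunion : Set.pi univ E = ⋃ m, Set.pi univ (B m) := by
    ext x
    simp only [mem_iUnion]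
    constructor
    · intro hx
      obtain ⟨p, hp, hxp⟩ := mem_punion.mp (hsub hx)
      obtain ⟨m, rfl⟩ := List.mem_iff_get.mp hp
      exact ⟨m, (hBpi m).symm ▸ ⟨hx, hxp⟩⟩
    · rintro ⟨m, hm⟩
      rw [hBpi m] at hm
      exact hm.1
  have hpair : Pairwise fun m m' => Disjoint (Set.pi univ (B m)) (Set.pi univ (B m')) := by
    have hget := List.pairwise_iff_get.mp hL.2
    intro m m' hne
    have key : ∀ a b : Fin L.length, a < b →
        Disjoint (Set.pi univ (B a)) (Set.pi univ (B b)) := by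
      intro a b hab
      rw [hBpi a, hBpi b]
      exact ((hget a b hab).mono inter_subset_right inter_subset_right)
    rcases lt_or_gt_of_ne hne with h | h
    · exact key _ _ h
    · exact (key _ _ h).symm
  rw [hadd E L.length B hE hBdatum hunion hpair, list_map_sum_get]

include hwd hdom hadd in
/-- Superadditivity: a pack of disjoint subcylinders of `C` has total mass at most `μ C`. -/
lemma pack_le (N : ℕ) : ∀ L : List (∀ i, Set (X i)), L.length = N → GoodPack L →
    ∀ C : ∀ i, Set (X i), IsCylinderDatum C →
      (∀ p ∈ L, ∀ i, p i ⊆ C i) → pmass μ L ≤ μ C := by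
  classical
  induction N with
  | zero =>
    intro L hlen _ C _ _
    rw [List.length_eq_zero_iff.mp hlen]
    simp [pmass]
  | succ N ih =>
    intro L hlen hL C hC hsub
    obtain ⟨p, L', rfl⟩ := List.exists_of_length_succ L hlen
    have hlen' : L'.length = N := by simpa using hlen
    have hp : IsCylinderDatum p := hL.1 p (by simp)
    have hL' : GoodPack L' := ⟨fun q hq => hL.1 q (by simp [hq]), (List.pairwise_cons.mp hL.2).2⟩
    have hdisjp : ∀ q ∈ L', Disjoint (Set.pi univ p) (Set.pi univ q) :=
      (List.pairwise_cons.mp hL.2).1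
    set P : ∀ i, Set (X i) := fun i => C i ∩ p i with hP
    have hPdatum : IsCylinderDatum P := datum_inter hC hp
    have hPpi : Set.pi univ P = Set.pi univ p := by
      rw [hP, pi_univ_inter]
      exact inter_eq_self_of_subset_right (pi_univ_mono (hsub p (by simp)))
    have hPA : ∀ i, P i ⊆ C i := fun i => inter_subset_left
    set s : Finset ι := (hC.2.union hPdatum.2).toFinset with hs
    have hsC : ∀ i, i ∉ s → C i = univ := by
      intro i hi
      simp only [hs, Set.Finite.mem_toFinset, mem_union, mem_setOf_eq, not_or] at hi
      exact not_ne_iff.mp hi.1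
    have hsP : ∀ i, i ∉ s → P i = univ := by
      intro i hi
      simp only [hs, Set.Finite.mem_toFinset, mem_union, mem_setOf_eq, not_or] at hi
      exact not_ne_iff.mp hi.2
    obtain ⟨D, hDdatum, hDsub, hDpair, hDdisjP, hDunion, hDsum, -⟩ :=
      exists_diff_partition μi μ hdom hadd C P hC hPdatum hPA s hsC hsP
    have hDGood : GoodPack D := ⟨hDdatum, hDpair⟩
    -- every q ∈ L' is inside the union of D
    have hqD : ∀ q ∈ L', Set.pi univ q ⊆ punion D := by
      intro q hq x hx
      have hxC : x ∈ Set.pi univ C := pi_univ_mono (hsub q (by simp [hq])) hx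
      rw [hDunion] at hxC
      rcases hxC with hxP | hxD
      · rw [hPpi] at hxP
        exact absurd hx (Set.disjoint_left.mp (hdisjp q hq) hxP)
      · exact hxD
    have hqdatum : ∀ q ∈ L', IsCylinderDatum q := fun q hq => hL'.1 q hq
    -- expand each q over the pieces of D
    have hqsum : ∀ q ∈ L', μ q = (D.map (fun d => μ (fun i => q i ∩ d i))).sum := by
      intro q hq
      exact haddList μ hadd hDGood (hqdatum q hq) (hqD q hq)
    -- apply induction per piece of D
    have hpiece : ∀ d ∈ D, (L'.map (fun q => μ (fun i => q i ∩ d i))).sum ≤ μ d := by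
      intro d hd
      have : (L'.map (fun q (i : ι) => q i ∩ d i)).length = N := by simpa using hlen'
      have hGood : GoodPack (L'.map (fun q (i : ι) => q i ∩ d i)) := by
        constructor
        · intro r hr
          obtain ⟨q, hq, rfl⟩ := List.mem_map.mp hr
          exact datum_inter (hqdatum q hq) (hDdatum d hd)
        · refine List.Pairwise.map _ ?_ hL'.2
          intro a b hab
          exact hab.mono (pi_univ_mono fun i => inter_subset_left)
            (pi_univ_mono fun i => inter_subset_left)
      have hsub' : ∀ r ∈ L'.map (fun q (i : ι) => q i ∩ d i), ∀ i, r i ⊆ d i := by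
        intro r hr i
        obtain ⟨q, hq, rfl⟩ := List.mem_map.mp hr
        exact inter_subset_right
      have := ih (L'.map (fun q (i : ι) => q i ∩ d i)) this hGood d (hDdatum d hd) hsub'
      calc (L'.map (fun q => μ (fun i => q i ∩ d i))).sum
          = pmass μ (L'.map (fun q (i : ι) => q i ∩ d i)) := by
            rw [pmass, List.map_map]; rfl
        _ ≤ μ d := this
    have hswap : (L'.map (fun q => (D.map (fun d => μ (fun i => q i ∩ d i))).sum)).sum
        = (D.map (fun d => (L'.map (fun q => μ (fun i => q i ∩ d i))).sum)).sum :=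
      list_sum_comm L' D _
    have hμp : μ p = μ P := hwd p P hp hPdatum hPpi.symm
    calc pmass μ (p :: L') = μ p + pmass μ L' := pmass_cons μ p L'
      _ = μ P + (L'.map μ).sum := by rw [hμp]; rfl
      _ = μ P + (L'.map (fun q => (D.map (fun d => μ (fun i => q i ∩ d i))).sum)).sum := by
          rw [List.map_congr_left hqsum]
      _ = μ P + (D.map (fun d => (L'.map (fun q => μ (fun i => q i ∩ d i))).sum)).sum := by
          rw [hswap]
      _ ≤ μ P + (D.map μ).sum := by
          gcongr
          rw [list_map_sum_get, list_map_sum_get]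
          refine Finset.sum_le_sum fun k _ => ?_
          simpa using hpiece (D.get k) (D.get_mem _)
      _ = μ C := hDsum.symm

include hwd hdom hadd in
/-- Remove a cylinder from a pack: the remainder is again a pack. -/
lemma peel (L : List (∀ i, Set (X i))) (hL : GoodPack L) (E : ∀ i, Set (X i))
    (hE : IsCylinderDatum E) :
    ∃ L' : List (∀ i, Set (X i)), GoodPack L' ∧
      punion L' = punion L \ Set.pi univ E ∧
      pmass μ L ≤ (L.map (fun p => μ (fun i => p i ∩ E i))).sum + pmass μ L' ∧
      (∀ q ∈ L', ∃ p ∈ L, ∀ i, q i ⊆ p i) := by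
  classical
  induction L with
  | nil =>
    refine ⟨[], ⟨by simp, by simp⟩, by simp [punion_nil], by simp [pmass_nil], by simp⟩
  | cons p L ih =>
    have hp : IsCylinderDatum p := hL.1 p (by simp)
    have hL' : GoodPack L := ⟨fun q hq => hL.1 q (by simp [hq]), (List.pairwise_cons.mp hL.2).2⟩
    have hdisjp := (List.pairwise_cons.mp hL.2).1
    obtain ⟨L₁, hL₁good, hL₁un, hL₁mass, hL₁sub⟩ := ih hL'
    have hPdatum : IsCylinderDatum (fun i => p i ∩ E i) := datum_inter hp hE
    have hPsub : ∀ i, (fun i => p i ∩ E i) i ⊆ p i := fun i => inter_subset_left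
    set s := (hp.2.union hPdatum.2).toFinset with hs
    have hsp : ∀ i, i ∉ s → p i = univ := by
      intro i hi
      simp only [hs, Set.Finite.mem_toFinset, mem_union, mem_setOf_eq, not_or] at hi
      exact not_ne_iff.mp hi.1
    have hsP : ∀ i, i ∉ s → (fun i => p i ∩ E i) i = univ := by
      intro i hi
      simp only [hs, Set.Finite.mem_toFinset, mem_union, mem_setOf_eq, not_or] at hi
      exact not_ne_iff.mp hi.2
    obtain ⟨D, hDdatum, hDsub, hDpair, hDdisjP, hDunion, hDsum, -⟩ :=
      exists_diff_partition μi μ hdom hadd p (fun i => p i ∩ E i) hp hPdatum hPsub s hsp hsP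
    have hPpi : Set.pi univ (fun i => p i ∩ E i) = Set.pi univ p ∩ Set.pi univ E :=
      pi_univ_inter
    have hDun : punion D = Set.pi univ p \ Set.pi univ E := by
      ext x
      constructor
      · intro hx
        obtain ⟨q, hq, hxq⟩ := mem_punion.mp hx
        have hxp : x ∈ Set.pi univ p := pi_univ_mono (hDsub q hq) hxq
        refine ⟨hxp, fun hxE => ?_⟩
        have hxP : x ∈ Set.pi univ (fun i => p i ∩ E i) := hPpi.symm ▸ ⟨hxp, hxE⟩
        exact Set.disjoint_left.mp (hDdisjP q hq) hxq hxP
      · rintro ⟨hxp, hxE⟩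
        have := hDunion ▸ hxp
        rcases this with hxP | hxD
        · exact absurd (hPpi ▸ hxP).2 hxE
        · exact hxD
    refine ⟨D ++ L₁, ?_, ?_, ?_, ?_⟩
    · constructor
      · intro q hq
        rcases List.mem_append.mp hq with h | h
        · exact hDdatum q h
        · obtain ⟨r, hr, hsubr⟩ := hL₁sub q h
          exact hL₁good.1 q h
      · rw [List.pairwise_append]
        refine ⟨hDpair, hL₁good.2, ?_⟩
        intro a ha b hb
        obtain ⟨r, hr, hsubr⟩ := hL₁sub b hb
        have h1 : Set.pi univ a ⊆ Set.pi univ p := pi_univ_mono (hDsub a ha)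
        have h2 : Set.pi univ b ⊆ Set.pi univ r := pi_univ_mono hsubr
        exact ((hdisjp r hr).mono h1 h2)
    · rw [punion_append, hDun, hL₁un, punion_cons]
      rw [Set.union_diff_distrib]
    · rw [pmass_cons, hDsum, List.map_cons, List.sum_cons, pmass_append]
      calc μ (fun i => p i ∩ E i) + pmass μ D + pmass μ L
            ≤ μ (fun i => p i ∩ E i) + pmass μ D
              + ((L.map (fun p => μ (fun i => p i ∩ E i))).sum + pmass μ L₁) := by
              gcongr
        _ = μ (fun i => p i ∩ E i) + (L.map (fun p => μ (fun i => p i ∩ E i))).sum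
              + (pmass μ D + pmass μ L₁) := by ring
    · intro q hq
      rcases List.mem_append.mp hq with h | h
      · exact ⟨p, by simp, hDsub q h⟩
      · obtain ⟨r, hr, hsubr⟩ := hL₁sub q h
        exact ⟨r, by simp [hr], hsubr⟩

include hwd hdom hadd in
/-- Peeling with the removed mass bounded by `μ E`. -/
lemma peel' (L : List (∀ i, Set (X i))) (hL : GoodPack L) (E : ∀ i, Set (X i))
    (hE : IsCylinderDatum E) :
    ∃ L' : List (∀ i, Set (X i)), GoodPack L' ∧
      punion L' = punion L \ Set.pi univ E ∧
      pmass μ L ≤ μ E + pmass μ L' ∧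
      (∀ q ∈ L', ∃ p ∈ L, ∀ i, q i ⊆ p i) := by
  obtain ⟨L', h1, h2, h3, h4⟩ := peel μi μ hwd hdom hadd L hL E hE
  refine ⟨L', h1, h2, ?_, h4⟩
  refine h3.trans ?_
  gcongr
  -- the pieces p ∩ E are disjoint subcylinders of E
  have : (L.map (fun p => μ (fun i => p i ∩ E i))).sum
      = pmass μ (L.map (fun p (i : ι) => p i ∩ E i)) := by
    rw [pmass, List.map_map]; rfl
  rw [this]
  refine pack_le μi μ hwd hdom hadd _ _ rfl ?_ E hE ?_
  · constructor
    · intro r hr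
      obtain ⟨q, hq, rfl⟩ := List.mem_map.mp hr
      exact datum_inter (hL.1 q hq) hE
    · refine List.Pairwise.map _ ?_ hL.2
      intro a b hab
      exact hab.mono (pi_univ_mono fun i => inter_subset_left)
        (pi_univ_mono fun i => inter_subset_left)
  · intro r hr i
    obtain ⟨q, hq, rfl⟩ := List.mem_map.mp hr
    exact inter_subset_right

/-- The per-coordinate shrinking relation: `s` is a measurable subset of `t` whose closure
is inside `t`, containing a compact `K` such that `s \ K` is inner null. -/
def ShrinkRel [∀ i, TopologicalSpace (X i)] (μi : ∀ i, Measure (X i)) (i : ι)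
    (s t : Set (X i)) : Prop :=
  s ⊆ t ∧ closure s ⊆ t ∧
    ((∃ K, IsCompact K ∧ K ⊆ s ∧ ∀ E, MeasurableSet E → E ⊆ s \ K → μi i E = 0)
      ∨ (s = univ ∧ t = univ))

end Packs

section Shrink

variable [∀ i, TopologicalSpace (X i)] [∀ i, BorelSpace (X i)]
  (μi : ∀ i, Measure (X i)) [∀ i, IsProbabilityMeasure (μi i)]
  [∀ i, (μi i).InnerRegular] [∀ i, (μi i).OuterRegular]

lemma shrink_coord (i : ι) (t : Set (X i)) (ht : MeasurableSet t) {δ : ENNReal} (hδ : δ ≠ 0) :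
    ∃ t' : Set (X i), MeasurableSet t' ∧ t' ⊆ t ∧ closure t' ⊆ t ∧
      (∃ K, IsCompact K ∧ K ⊆ t' ∧ ∀ E, MeasurableSet E → E ⊆ t' \ K → μi i E = 0) ∧
      μi i (t \ t') ≤ δ := by
  have hδ2 : δ / 2 ≠ 0 := by
    simp [ENNReal.div_eq_zero_iff, hδ]
  -- closed approximation from outer regularity of the complement
  have h1 : μi i tᶜ < μi i tᶜ + δ / 2 :=
    ENNReal.lt_add_right (measure_ne_top _ _) hδ2
  obtain ⟨U, hCU, hUopen, hU⟩ := Set.exists_isOpen_lt_of_lt tᶜ _ h1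
  have hFclosed : IsClosed Uᶜ := hUopen.isClosed_compl
  have hFt : Uᶜ ⊆ t := by
    intro x hx
    by_contra hxt
    exact hx (hCU hxt)
  have hF1 : μi i (t \ Uᶜ) ≤ δ / 2 := by
    have heq : t \ Uᶜ = U \ tᶜ := by
      ext x; simp only [mem_diff, mem_compl_iff, not_not]
      tauto
    rw [heq, measure_diff hCU ht.compl.nullMeasurableSet (measure_ne_top _ _)]
    exact tsub_le_iff_right.mpr (by rw [add_comm]; exact hU.le)
  -- compact approximation from inner regularity
  obtain ⟨K, hKF, hKcomp, hK⟩ :=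
    (Measure.InnerRegular.innerRegular (μ := μi i)).exists_subset_lt_add isCompact_empty
      hFclosed.measurableSet (measure_ne_top _ _) hδ2
  set t' : Set (X i) := toMeasurable (μi i) K ∩ Uᶜ with ht'
  have hKt' : K ⊆ t' := subset_inter (subset_toMeasurable _ _) hKF
  have ht'meas : MeasurableSet t' := (measurableSet_toMeasurable _ _).inter hFclosed.measurableSet
  have ht'F : t' ⊆ Uᶜ := inter_subset_right
  have ht'le : μi i t' ≤ μi i K := by
    calc μi i t' ≤ μi i (toMeasurable (μi i) K) := measure_mono inter_subset_left
      _ = μi i K := measure_toMeasurable _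
  refine ⟨t', ht'meas, ht'F.trans hFt, (closure_minimal ht'F hFclosed).trans hFt, ?_, ?_⟩
  · refine ⟨K, hKcomp, hKt', ?_⟩
    intro E hE hEsub
    have hKsub : K ⊆ t' \ E := by
      intro x hx
      exact ⟨hKt' hx, fun hxE => (hEsub hxE).2 hx⟩
    have h2 : μi i K ≤ μi i t' - μi i E := by
      rw [← measure_diff (fun x hx => (hEsub hx).1) hE.nullMeasurableSet (measure_ne_top _ _)]
      exact measure_mono hKsub
    have h3 : μi i E ≤ μi i t' := measure_mono fun x hx => (hEsub hx).1
    have h4 : μi i K + μi i E ≤ μi i t' := by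
      have := add_le_add_left h2 (μi i E)
      rwa [tsub_add_cancel_of_le h3] at this
    have h5 : μi i K + μi i E ≤ μi i K + 0 := by
      rw [add_zero]
      exact h4.trans ht'le
    exact le_antisymm ((ENNReal.add_le_add_iff_left (measure_ne_top _ _)).mp h5) zero_le
  · -- mass bound
    have hsplit : t \ t' ⊆ (t \ Uᶜ) ∪ (Uᶜ \ t') := by
      intro x hx
      by_cases hxF : x ∈ Uᶜ
      · exact Or.inr ⟨hxF, hx.2⟩
      · exact Or.inl ⟨hx.1, hxF⟩
    have hF2 : μi i (Uᶜ \ t') ≤ δ / 2 := by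
      rw [measure_diff ht'F ht'meas.nullMeasurableSet (measure_ne_top _ _)]
      refine tsub_le_iff_right.mpr ?_
      calc μi i Uᶜ ≤ μi i K + δ / 2 := hK.le
        _ = δ / 2 + μi i K := add_comm _ _
        _ ≤ δ / 2 + μi i t' := by
            exact add_le_add_right (measure_mono hKt' : μi i K ≤ μi i t') _
    calc μi i (t \ t') ≤ μi i (t \ Uᶜ) + μi i (Uᶜ \ t') :=
          (measure_mono hsplit).trans (measure_union_le _ _)
      _ ≤ δ / 2 + δ / 2 := add_le_add hF1 hF2
      _ = δ := ENNReal.add_halves δ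

end Shrink

section Shrink2

variable [∀ i, TopologicalSpace (X i)] [∀ i, BorelSpace (X i)]
  (μi : ∀ i, Measure (X i)) [∀ i, IsProbabilityMeasure (μi i)]
  [∀ i, (μi i).InnerRegular] [∀ i, (μi i).OuterRegular]
  (μ : (∀ i, Set (X i)) → ENNReal)
  (hwd : ∀ A B : ∀ i, Set (X i), IsCylinderDatum A → IsCylinderDatum B →
    Set.pi univ A = Set.pi univ B → μ A = μ B)
  (hdom : ∀ A : ∀ i, Set (X i), IsCylinderDatum A → ∀ i, μ A ≤ μi i (A i))
  (hadd : ∀ (A : ∀ i, Set (X i)) (n : ℕ) (B : Fin n → ∀ i, Set (X i)),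
    IsCylinderDatum A → (∀ m, IsCylinderDatum (B m)) →
    Set.pi univ A = ⋃ m, Set.pi univ (B m) →
    (Pairwise fun m m' => Disjoint (Set.pi univ (B m)) (Set.pi univ (B m'))) →
    μ A = ∑ m, μ (B m))

include hdom hadd in
lemma mu_mono {A B : ∀ i, Set (X i)} (hA : IsCylinderDatum A) (hB : IsCylinderDatum B)
    (hBA : ∀ i, B i ⊆ A i) : μ B ≤ μ A := by
  classical
  set s := (hA.2.union hB.2).toFinset with hs
  have hsA : ∀ i, i ∉ s → A i = univ := by
    intro i hi
    simp only [hs, Set.Finite.mem_toFinset, mem_union, mem_setOf_eq, not_or] at hi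
    exact not_ne_iff.mp hi.1
  have hsB : ∀ i, i ∉ s → B i = univ := by
    intro i hi
    simp only [hs, Set.Finite.mem_toFinset, mem_union, mem_setOf_eq, not_or] at hi
    exact not_ne_iff.mp hi.2
  obtain ⟨D, -, -, -, -, -, hDsum, -⟩ :=
    exists_diff_partition μi μ hdom hadd A B hA hB hBA s hsA hsB
  rw [hDsum]
  exact le_self_add

include hdom hadd in
lemma mu_diff_le {A B : ∀ i, Set (X i)} (hA : IsCylinderDatum A) (hB : IsCylinderDatum B)
    (hBA : ∀ i, B i ⊆ A i) (s : Finset ι)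
    (hsA : ∀ i, i ∉ s → A i = univ) (hsB : ∀ i, i ∉ s → B i = univ) :
    μ A ≤ μ B + ∑ i ∈ s, μi i (A i \ B i) := by
  obtain ⟨D, -, -, -, -, -, hDsum, hDle⟩ :=
    exists_diff_partition μi μ hdom hadd A B hA hB hBA s hsA hsB
  rw [hDsum]
  exact add_le_add_right hDle _

include hdom hadd in
lemma shrink_piece (p : ∀ i, Set (X i)) (hp : IsCylinderDatum p) {δ : ENNReal} (hδ : δ ≠ 0) :
    ∃ p' : ∀ i, Set (X i), IsCylinderDatum p' ∧ (∀ i, p' i ⊆ p i) ∧ μ p ≤ μ p' + δ ∧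
      ∀ i, ShrinkRel μi i (p' i) (p i) := by
  classical
  set s := hp.2.toFinset with hs
  have hsuniv : ∀ i, i ∉ s → p i = univ := by
    intro i hi
    simp only [hs, Set.Finite.mem_toFinset, mem_setOf_eq] at hi
    exact not_ne_iff.mp hi
  have hδ' : δ / (s.card : ENNReal) ≠ 0 := by
    simp [ENNReal.div_eq_zero_iff, hδ]
  have H : ∀ i, ∃ t' : Set (X i), MeasurableSet t' ∧ t' ⊆ p i ∧
      μi i (p i \ t') ≤ δ / (s.card : ENNReal) ∧ ShrinkRel μi i t' (p i) ∧
      (i ∉ s → t' = univ) := by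
    intro i
    by_cases hi : i ∈ s
    · obtain ⟨t', h1, h2, h3, h4, h5⟩ := shrink_coord μi i (p i) (hp.1 i) hδ'
      exact ⟨t', h1, h2, h5, ⟨h2, h3, Or.inl h4⟩, fun h => absurd hi h⟩
    · refine ⟨univ, MeasurableSet.univ, by rw [hsuniv i hi], by simp, ?_, fun _ => rfl⟩
      exact ⟨by rw [hsuniv i hi], by rw [hsuniv i hi, closure_univ], Or.inr ⟨rfl, hsuniv i hi⟩⟩
  choose p' h1 h2 h3 h4 h5 using H
  have hp'datum : IsCylinderDatum p' := by
    refine ⟨h1, hp.2.subset ?_⟩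
    intro i hi
    simp only [mem_setOf_eq] at hi ⊢
    intro hpuniv
    have : i ∉ s := by simp [hs, Set.Finite.mem_toFinset, hpuniv]
    exact hi (h5 i this)
  refine ⟨p', hp'datum, h2, ?_, h4⟩
  have hmass := mu_diff_le μi μ hdom hadd hp hp'datum h2 s hsuniv
    (fun i hi => h5 i hi)
  refine hmass.trans ?_
  gcongr
  calc ∑ i ∈ s, μi i (p i \ p' i) ≤ ∑ _i ∈ s, δ / (s.card : ENNReal) :=
        Finset.sum_le_sum fun i _ => h3 i
    _ = (s.card : ENNReal) * (δ / (s.card : ENNReal)) := by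
        rw [Finset.sum_const, nsmul_eq_mul]
    _ ≤ δ := ENNReal.mul_div_le

include hdom hadd in
lemma shrink_pack (L : List (∀ i, Set (X i))) (hL : GoodPack L) {δ₀ : ENNReal} (hδ : δ₀ ≠ 0) :
    ∃ L' : List (∀ i, Set (X i)), GoodPack L' ∧ punion L' ⊆ punion L ∧
      pmass μ L ≤ pmass μ L' + (L.length : ENNReal) * δ₀ ∧
      (∀ q' ∈ L', ∃ p ∈ L, ∀ i, ShrinkRel μi i (q' i) (p i)) := by
  induction L with
  | nil =>
    exact ⟨[], ⟨by simp, by simp⟩, by simp [punion_nil], by simp [pmass_nil], by simp⟩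
  | cons p L ih =>
    have hp : IsCylinderDatum p := hL.1 p (by simp)
    have hL' : GoodPack L := ⟨fun q hq => hL.1 q (by simp [hq]), (List.pairwise_cons.mp hL.2).2⟩
    have hdisjp := (List.pairwise_cons.mp hL.2).1
    obtain ⟨L₁, h1, h2, h3, h4⟩ := ih hL'
    obtain ⟨p', hp'datum, hp'sub, hp'mass, hp'rel⟩ := shrink_piece μi μ hdom hadd p hp hδ
    refine ⟨p' :: L₁, ?_, ?_, ?_, ?_⟩
    · constructor
      · intro q hq
        rcases List.mem_cons.mp hq with rfl | hq
        · exact hp'datum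
        · exact h1.1 q hq
      · rw [List.pairwise_cons]
        refine ⟨?_, h1.2⟩
        intro q' hq'
        obtain ⟨r, hr, hrel⟩ := h4 q' hq'
        refine (hdisjp r hr).mono (pi_univ_mono hp'sub) (pi_univ_mono fun i => (hrel i).1)
    · rw [punion_cons, punion_cons]
      exact Set.union_subset_union (pi_univ_mono hp'sub) h2
    · rw [pmass_cons, pmass_cons, List.length_cons]
      calc μ p + pmass μ L ≤ (μ p' + δ₀) + (pmass μ L₁ + (L.length : ENNReal) * δ₀) :=
            add_le_add hp'mass h3
        _ = μ p' + pmass μ L₁ + ((L.length : ENNReal) * δ₀ + δ₀) := by ring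
        _ = μ p' + pmass μ L₁ + ((L.length : ℕ) + 1 : ENNReal) * δ₀ := by
            rw [add_mul, one_mul]
        _ = μ p' + pmass μ L₁ + ((L.length + 1 : ℕ) : ENNReal) * δ₀ := by
            push_cast
            ring
    · intro q' hq'
      rcases List.mem_cons.mp hq' with rfl | hq'
      · exact ⟨p, by simp, hp'rel⟩
      · obtain ⟨r, hr, hrel⟩ := h4 q' hq'
        exact ⟨r, by simp [hr], hrel⟩

end Shrink2

section MainLemma

variable [∀ i, TopologicalSpace (X i)] [∀ i, BorelSpace (X i)]
  (μi : ∀ i, Measure (X i)) [∀ i, IsProbabilityMeasure (μi i)]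
  [∀ i, (μi i).InnerRegular] [∀ i, (μi i).OuterRegular]
  (μ : (∀ i, Set (X i)) → ENNReal)
  (hwd : ∀ A B : ∀ i, Set (X i), IsCylinderDatum A → IsCylinderDatum B →
    Set.pi univ A = Set.pi univ B → μ A = μ B)
  (hdom : ∀ A : ∀ i, Set (X i), IsCylinderDatum A → ∀ i, μ A ≤ μi i (A i))
  (hadd : ∀ (A : ∀ i, Set (X i)) (n : ℕ) (B : Fin n → ∀ i, Set (X i)),
    IsCylinderDatum A → (∀ m, IsCylinderDatum (B m)) →
    Set.pi univ A = ⋃ m, Set.pi univ (B m) →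
    (Pairwise fun m m' => Disjoint (Set.pi univ (B m)) (Set.pi univ (B m'))) →
    μ A = ∑ m, μ (B m))

lemma pack_eq_of_overlap {L : List (∀ i, Set (X i))} (hL : GoodPack L)
    {p q : ∀ i, Set (X i)} (hp : p ∈ L) (hq : q ∈ L)
    (h : (Set.pi univ p ∩ Set.pi univ q).Nonempty) : p = q := by
  by_contra hne
  have hdisj : Disjoint (Set.pi univ p) (Set.pi univ q) :=
    by haveI : Std.Symm (fun p q : ∀ i, Set (X i) => Disjoint (Set.pi univ p) (Set.pi univ q)) := ⟨fun a b h => h.symm⟩; exact hL.2.forall hp hq hne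
  obtain ⟨x, hx1, hx2⟩ := h
  exact Set.disjoint_left.mp hdisj hx1 hx2

include hdom in
lemma pi_nonempty_of_mu_pos [∀ i, Nonempty (X i)] {q : ∀ i, Set (X i)}
    (hq : IsCylinderDatum q) (h : 0 < μ q) : (Set.pi univ q).Nonempty := by
  by_contra hc
  rw [Set.not_nonempty_iff_eq_empty] at hc
  exact absurd (mu_of_pi_empty μi μ hdom hq hc) (ne_of_gt h)

include hwd hdom hadd in
/-- The main countable subadditivity lemma. -/
lemma mu_sigma_subadd [Nonempty ι] [∀ i, Nonempty (X i)]
    (A : ∀ i, Set (X i)) (hA : IsCylinderDatum A) (B : ℕ → ∀ i, Set (X i))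
    (hB : ∀ n, IsCylinderDatum (B n))
    (hcov : Set.pi univ A ⊆ ⋃ n, Set.pi univ (B n)) :
    μ A ≤ ∑' n, μ (B n) := by
  classical
  by_contra hlt
  push_neg at hlt
  set T := ∑' n, μ (B n) with hT
  have hμA1 : μ A ≤ 1 := mu_le_one μi μ hdom hA
  have hTne : T ≠ ⊤ := ne_top_of_lt (hlt.trans_le hμA1)
  set ε := μ A - T with hε
  have hεpos : ε ≠ 0 := by
    simp only [hε, ne_eq, tsub_eq_zero_iff_le]
    exact not_le.mpr hlt
  have hεne : ε ≠ ⊤ := by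
    refine ne_top_of_le_ne_top (by simp : (1 : ENNReal) ≠ ⊤) ?_
    exact le_trans (tsub_le_self) hμA1
  have hAT : T + ε = μ A := by
    rw [hε, add_comm]
    exact tsub_add_cancel_of_le hlt.le
  -- error budgets
  set δ : ℕ → ENNReal := fun N => ε * 2⁻¹ ^ (N + 2) with hδdef
  have hδne : ∀ N, δ N ≠ 0 := by
    intro N
    simp only [hδdef]
    refine mul_ne_zero hεpos (pow_ne_zero _ ?_)
    simp
  have hgeo : ∑' k : ℕ, (2⁻¹ : ENNReal) ^ k = 2 := by
    rw [ENNReal.tsum_geometric, ENNReal.one_sub_inv_two, inv_inv]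
  have hδsum : ∀ N, ∑ k ∈ Finset.range N, δ k ≤ ε / 2 := by
    intro N
    calc ∑ k ∈ Finset.range N, δ k ≤ ∑' k : ℕ, δ k := ENNReal.sum_le_tsum _
      _ = ∑' k : ℕ, ε * 2⁻¹ ^ 2 * 2⁻¹ ^ k := by
          refine tsum_congr fun k => ?_
          simp only [hδdef]
          rw [pow_add, pow_two]
          ring
      _ = ε * 2⁻¹ ^ 2 * 2 := by rw [ENNReal.tsum_mul_left, hgeo]
      _ = ε * 2⁻¹ := by
          have h22 : (2⁻¹ : ENNReal) ^ 2 * 2 = 2⁻¹ := by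
            rw [pow_two, mul_assoc, ENNReal.inv_mul_cancel (by simp) (by simp), mul_one]
          rw [mul_assoc, h22]
      _ = ε / 2 := by rw [ENNReal.div_eq_inv_mul, mul_comm]
  -- the invariant and the step
  let Inv : ℕ → List (∀ i, Set (X i)) → Prop := fun N L =>
    GoodPack L ∧ punion L ⊆ Set.pi univ A ∧
      (∀ n, n < N → Disjoint (punion L) (Set.pi univ (B n))) ∧
      μ A ≤ pmass μ L + (∑ n ∈ Finset.range N, μ (B n)) + (∑ k ∈ Finset.range N, δ k)
  let Link : List (∀ i, Set (X i)) → List (∀ i, Set (X i)) → Prop := fun L L' =>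
    ∀ q' ∈ L', ∃ p ∈ L, ∃ sh : ∀ i, Set (X i),
      (∀ i, q' i ⊆ sh i) ∧ (∀ i, ShrinkRel μi i (sh i) (p i))
  have hinit : Inv 0 [A] := by
    refine ⟨⟨by simpa using hA, by simp⟩, ?_, by simp, ?_⟩
    · rw [punion_cons, punion_nil, Set.union_empty]
    · simp [pmass]
  have hstep : ∀ N, ∀ L, Inv N L → ∃ L', Inv (N + 1) L' ∧ Link L L' := by
    intro N L hI
    obtain ⟨hGood, hsubA, hdisj, hmass⟩ := hI
    have hδ₀ : δ N / ((L.length : ENNReal) + 1) ≠ 0 := by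
      simp only [ne_eq, ENNReal.div_eq_zero_iff, not_or]
      exact ⟨hδne N, ENNReal.add_ne_top.mpr ⟨ENNReal.natCast_ne_top _, ENNReal.one_ne_top⟩⟩
    obtain ⟨L₁, hL₁good, hL₁sub, hL₁mass, hL₁rel⟩ :=
      shrink_pack μi μ hdom hadd L hGood hδ₀
    have hL₁mass' : pmass μ L ≤ pmass μ L₁ + δ N := by
      refine hL₁mass.trans ?_
      gcongr
      calc (L.length : ENNReal) * (δ N / ((L.length : ENNReal) + 1))
          ≤ ((L.length : ENNReal) + 1) * (δ N / ((L.length : ENNReal) + 1)) := by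
            gcongr
            exact le_self_add
        _ ≤ δ N := ENNReal.mul_div_le
    obtain ⟨L₂, hL₂good, hL₂un, hL₂mass, hL₂sub⟩ :=
      peel' μi μ hwd hdom hadd L₁ hL₁good (B N) (hB N)
    refine ⟨L₂, ⟨hL₂good, ?_, ?_, ?_⟩, ?_⟩
    · rw [hL₂un]
      exact (Set.diff_subset).trans (hL₁sub.trans hsubA)
    · intro n hn
      rcases Nat.lt_succ_iff_lt_or_eq.mp hn with h | rfl
      · refine Disjoint.mono_left ?_ (hdisj n h)
        rw [hL₂un]
        exact (Set.diff_subset).trans hL₁sub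
      · rw [hL₂un]
        exact disjoint_sdiff_left
    · calc μ A ≤ pmass μ L + (∑ n ∈ Finset.range N, μ (B n))
            + (∑ k ∈ Finset.range N, δ k) := hmass
        _ ≤ (pmass μ L₁ + δ N) + (∑ n ∈ Finset.range N, μ (B n))
            + (∑ k ∈ Finset.range N, δ k) := by gcongr
        _ ≤ ((μ (B N) + pmass μ L₂) + δ N) + (∑ n ∈ Finset.range N, μ (B n))
            + (∑ k ∈ Finset.range N, δ k) := by gcongr
        _ = pmass μ L₂ + ((∑ n ∈ Finset.range N, μ (B n)) + μ (B N))
            + ((∑ k ∈ Finset.range N, δ k) + δ N) := by ring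
        _ = pmass μ L₂ + (∑ n ∈ Finset.range (N + 1), μ (B n))
            + (∑ k ∈ Finset.range (N + 1), δ k) := by
            rw [Finset.sum_range_succ, Finset.sum_range_succ]
    · intro q' hq'
      obtain ⟨sh, hsh, hsubsh⟩ := hL₂sub q' hq'
      obtain ⟨p, hp, hrel⟩ := hL₁rel sh hsh
      exact ⟨p, hp, sh, hsubsh, hrel⟩
  choose F hF1 hF2 using hstep
  -- the recursively defined sequence of packs
  let Rb : (N : ℕ) → {L : List (∀ i, Set (X i)) // Inv N L} := fun N =>
    Nat.rec ⟨[A], hinit⟩ (fun N prev => ⟨F N prev.1 prev.2, hF1 N prev.1 prev.2⟩) N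
  set P : ℕ → List (∀ i, Set (X i)) := fun N => (Rb N).1 with hPdef
  have hPInv : ∀ N, Inv N (P N) := fun N => (Rb N).2
  have hPlink : ∀ N, Link (P N) (P (N + 1)) := fun N => hF2 N (P N) (Rb N).2
  have hPgood : ∀ N, GoodPack (P N) := fun N => (hPInv N).1
  have hPdatum : ∀ N, ∀ p ∈ P N, IsCylinderDatum p := fun N => (hPgood N).1
  -- positivity of the total masses
  have hpos : ∀ N, 0 < pmass μ (P N) := by
    intro N
    obtain ⟨-, -, -, hmass⟩ := hPInv N
    by_contra hc
    push_neg at hc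
    have h0 : pmass μ (P N) = 0 := le_antisymm hc zero_le
    rw [h0, zero_add] at hmass
    have hchain : T + ε ≤ T + ε / 2 := by
      calc T + ε = μ A := hAT
        _ ≤ (∑ n ∈ Finset.range N, μ (B n)) + (∑ k ∈ Finset.range N, δ k) := hmass
        _ ≤ T + ε / 2 := add_le_add (ENNReal.sum_le_tsum _) (hδsum N)
    have : ε ≤ ε / 2 := (ENNReal.add_le_add_iff_left hTne).mp hchain
    exact absurd (lt_of_le_of_lt this (ENNReal.half_lt_self hεpos hεne)) (lt_irrefl _)
  -- ancestors
  have hanc : ∀ N M, N ≤ M → ∀ q ∈ P M, ∃ p ∈ P N, ∀ i, q i ⊆ p i := by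
    intro N M hNM
    induction M, hNM using Nat.le_induction with
    | base => exact fun q hq => ⟨q, hq, fun i => subset_rfl⟩
    | succ M hNM ih =>
      intro q hq
      obtain ⟨p, hp, sh, hsub1, hrel⟩ := hPlink M q hq
      obtain ⟨r, hr, hsub2⟩ := ih p hp
      exact ⟨r, hr, fun i => ((hsub1 i).trans (hrel i).1).trans (hsub2 i)⟩
  -- "good" pieces: pieces with positive descendants at all levels
  let good : ℕ → (∀ i, Set (X i)) → Prop := fun N q =>
    q ∈ P N ∧ ∀ M, N ≤ M → ∃ r ∈ P M, 0 < μ r ∧ ∀ i, r i ⊆ q i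
  have good_pos : ∀ N q, good N q → 0 < μ q := by
    intro N q hgq
    obtain ⟨r, hr, hrpos, hrsub⟩ := hgq.2 N le_rfl
    have : r = q := by
      refine pack_eq_of_overlap (hPgood N) hr hgq.1 ?_
      obtain ⟨x, hx⟩ := pi_nonempty_of_mu_pos μi μ hdom (hPdatum N r hr) hrpos
      exact ⟨x, hx, pi_univ_mono hrsub hx⟩
    exact this ▸ hrpos
  -- base of the branch
  have hbase : ∃ q, good 0 q := by
    have hposM : ∀ M, ∃ r ∈ P M, 0 < μ r := fun M => exists_pos_of_pmass_pos μ (hpos M)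
    choose r hr hrpos using hposM
    choose a ha hasub using fun M => hanc 0 M (Nat.zero_le M) (r M) (hr M)
    have hinf : ∃ p ∈ P 0, {M : ℕ | a M = p}.Infinite := by
      by_contra hc
      push_neg at hc
      have hfin : (Set.univ : Set ℕ).Finite := by
        have hcover : (Set.univ : Set ℕ) ⊆ ⋃ p ∈ {p | p ∈ P 0}, {M : ℕ | a M = p} := by
          intro M _
          exact Set.mem_biUnion (ha M) rfl
        refine Set.Finite.subset (Set.Finite.biUnion (List.finite_toSet (P 0)) ?_) hcover
        intro p hp
        exact hc p hp
      exact Set.infinite_univ hfin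
    obtain ⟨p, hp, hpinf⟩ := hinf
    refine ⟨p, hp, ?_⟩
    intro M' hM'
    obtain ⟨M, hMmem, hMgt⟩ := hpinf.exists_gt M'
    obtain ⟨c, hc, hcsub⟩ := hanc M' M hMgt.le (r M) (hr M)
    have hcpos : 0 < μ c :=
      lt_of_lt_of_le (hrpos M)
        (mu_mono μi μ hdom hadd (hPdatum M' c hc) (hPdatum M (r M) (hr M)) hcsub)
    refine ⟨c, hc, hcpos, ?_⟩
    -- show c ⊆ p coordinatewise via ancestors and overlap
    obtain ⟨d, hd, hdsub⟩ := hanc 0 M' (Nat.zero_le M') c hc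
    have hdp : d = p := by
      refine pack_eq_of_overlap (hPgood 0) hd hp ?_
      obtain ⟨x, hx⟩ := pi_nonempty_of_mu_pos μi μ hdom (hPdatum M (r M) (hr M)) (hrpos M)
      refine ⟨x, pi_univ_mono (fun i => (hcsub i).trans (hdsub i)) hx, ?_⟩
      have : a M = p := hMmem
      exact this ▸ pi_univ_mono (hasub M) hx
    exact fun i => hdp ▸ hdsub i
  -- step of the branch
  have hstep_good : ∀ N q, good N q → ∃ q', (∀ i, q' i ⊆ q i) ∧ good (N + 1) q' := by
    intro N q hgq
    have hsel : ∀ M : ℕ, ∃ a ∈ P (N + 1), (0 < μ a ∧ ∀ i, a i ⊆ q i) ∧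
        ∃ r ∈ P (M + (N + 1)), 0 < μ r ∧ ∀ i, r i ⊆ a i := by
      intro M
      obtain ⟨r, hr, hrpos, hrsub⟩ := hgq.2 (M + (N + 1)) (by omega)
      obtain ⟨a, ha, hasub⟩ := hanc (N + 1) (M + (N + 1)) (by omega) r hr
      have hapos : 0 < μ a :=
        lt_of_lt_of_le hrpos
          (mu_mono μi μ hdom hadd (hPdatum _ a ha) (hPdatum _ r hr) hasub)
      obtain ⟨p, hp, hpsub⟩ := hanc N (N + 1) (Nat.le_succ N) a ha
      have hpq : p = q := by
        refine pack_eq_of_overlap (hPgood N) hp hgq.1 ?_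
        obtain ⟨x, hx⟩ := pi_nonempty_of_mu_pos μi μ hdom (hPdatum _ r hr) hrpos
        exact ⟨x, pi_univ_mono (fun i => (hasub i).trans (hpsub i)) hx,
          pi_univ_mono hrsub hx⟩
      exact ⟨a, ha, ⟨hapos, fun i => hpq ▸ hpsub i⟩, r, hr, hrpos, hasub⟩
    choose a ha haprop r hr hrpos hrsub using hsel
    have hinf : ∃ q' ∈ P (N + 1), {M : ℕ | a M = q'}.Infinite := by
      by_contra hc
      push_neg at hc
      have hfin : (Set.univ : Set ℕ).Finite := by
        have hcover : (Set.univ : Set ℕ) ⊆ ⋃ p ∈ {p | p ∈ P (N + 1)}, {M : ℕ | a M = p} := by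
          intro M _
          exact Set.mem_biUnion (ha M) rfl
        refine Set.Finite.subset (Set.Finite.biUnion (List.finite_toSet (P (N + 1))) ?_) hcover
        intro p hp
        exact hc p hp
      exact Set.infinite_univ hfin
    obtain ⟨q', hq', hq'inf⟩ := hinf
    have hq'pos : 0 < μ q' := by
      obtain ⟨M, hMmem, -⟩ := hq'inf.exists_gt 0
      have : a M = q' := hMmem
      exact this ▸ (haprop M).1
    have hq'sub : ∀ i, q' i ⊆ q i := by
      obtain ⟨M, hMmem, -⟩ := hq'inf.exists_gt 0
      have : a M = q' := hMmem
      exact this ▸ (haprop M).2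
    refine ⟨q', hq'sub, hq', ?_⟩
    intro M' hM'
    obtain ⟨M, hMmem, hMgt⟩ := hq'inf.exists_gt M'
    have haM : a M = q' := hMmem
    have hMle : M' ≤ M + (N + 1) := by omega
    obtain ⟨c, hc, hcsub⟩ := hanc M' (M + (N + 1)) hMle (r M) (hr M)
    have hcpos : 0 < μ c :=
      lt_of_lt_of_le (hrpos M)
        (mu_mono μi μ hdom hadd (hPdatum _ c hc) (hPdatum _ (r M) (hr M)) hcsub)
    refine ⟨c, hc, hcpos, ?_⟩
    obtain ⟨d, hd, hdsub⟩ := hanc (N + 1) M' hM' c hc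
    have hdq : d = q' := by
      refine pack_eq_of_overlap (hPgood (N + 1)) hd hq' ?_
      obtain ⟨x, hx⟩ := pi_nonempty_of_mu_pos μi μ hdom (hPdatum _ (r M) (hr M)) (hrpos M)
      refine ⟨x, pi_univ_mono (fun i => (hcsub i).trans (hdsub i)) hx, ?_⟩
      exact haM ▸ pi_univ_mono (hrsub M) hx
    exact fun i => hdq ▸ hdsub i
  -- construct the branch
  choose st hstsub hstgood using hstep_good
  obtain ⟨q₀, hq₀⟩ := hbase
  let Rb2 : (N : ℕ) → {q : ∀ i, Set (X i) // good N q} := fun N =>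
    Nat.rec ⟨q₀, hq₀⟩ (fun N prev => ⟨st N prev.1 prev.2, hstgood N prev.1 prev.2⟩) N
  set b : ℕ → ∀ i, Set (X i) := fun N => (Rb2 N).1 with hbdef
  have hbgood : ∀ N, good N (b N) := fun N => (Rb2 N).2
  have hbmem : ∀ N, b N ∈ P N := fun N => (hbgood N).1
  have hbpos : ∀ N, 0 < μ (b N) := fun N => good_pos N (b N) (hbgood N)
  have hbdatum : ∀ N, IsCylinderDatum (b N) := fun N => hPdatum N _ (hbmem N)
  have hbsub : ∀ N, ∀ i, b (N + 1) i ⊆ b N i := fun N => hstsub N (b N) (Rb2 N).2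
  have hbdec : ∀ N M, N ≤ M → ∀ i, b M i ⊆ b N i := by
    intro N M h
    induction M, h using Nat.le_induction with
    | base => exact fun i => subset_rfl
    | succ M hNM ih => exact fun i => (hbsub M i).trans (ih i)
  have hbne : ∀ N, (Set.pi univ (b N)).Nonempty :=
    fun N => pi_nonempty_of_mu_pos μi μ hdom (hbdatum N) (hbpos N)
  -- extract the per-stage shrink constraints along the branch
  have hcon : ∀ N, ∃ sh : ∀ i, Set (X i), (∀ i, b (N + 1) i ⊆ sh i) ∧
      ∀ i, ShrinkRel μi i (sh i) (b N i) := by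
    intro N
    obtain ⟨p, hp, sh, h1, h2⟩ := hPlink N (b (N + 1)) (hbmem (N + 1))
    have hpb : p = b N := by
      refine pack_eq_of_overlap (hPgood N) hp (hbmem N) ?_
      obtain ⟨x, hx⟩ := hbne (N + 1)
      exact ⟨x, pi_univ_mono (fun i => (h1 i).trans (h2 i).1) hx,
        pi_univ_mono (hbsub N) hx⟩
    exact ⟨sh, h1, fun i => hpb ▸ h2 i⟩
  choose sh hsh1 hsh2 using hcon
  -- per-coordinate limit points
  have hy : ∀ i, ∃ y : X i, ∀ N, y ∈ closure (sh N i) := by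
    intro i
    by_cases hcomp : ∃ N₀, ∃ K : Set (X i), IsCompact K ∧ K ⊆ sh N₀ i ∧
        ∀ E, MeasurableSet E → E ⊆ sh N₀ i \ K → μi i E = 0
    · obtain ⟨N₀, K, hKc, hKsub, hKnull⟩ := hcomp
      have hbM : ∀ M, N₀ + 1 ≤ M → b M i ⊆ sh N₀ i :=
        fun M hM => (hbdec (N₀ + 1) M hM i).trans (hsh1 N₀ i)
      have hxex : ∀ N : ℕ, ∃ x : X i, x ∈ b (N + (N₀ + 1)) i ∩ K := by
        intro N
        by_contra hc
        push_neg at hc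
        have hsubm : b (N + (N₀ + 1)) i ⊆ sh N₀ i \ K := by
          intro x hx
          refine ⟨hbM _ (Nat.le_add_left _ _) hx, fun hk => ?_⟩
          exact hc x ⟨hx, hk⟩
        have h0 := hKnull _ ((hbdatum _).1 i) hsubm
        have hpos' : 0 < μi i (b (N + (N₀ + 1)) i) :=
          lt_of_lt_of_le (hbpos _) (hdom _ (hbdatum _) i)
        exact absurd h0 (ne_of_gt hpos')
      choose x hx using hxex
      have hnb : Filter.NeBot (Filter.map x Filter.atTop) := Filter.map_neBot
      set U : Ultrafilter (X i) := Ultrafilter.of (Filter.map x Filter.atTop) with hU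
      have hUle : (U : Filter (X i)) ≤ Filter.map x Filter.atTop := Ultrafilter.of_le _
      have hmem_of_tail : ∀ s : Set (X i), (∀ᶠ N in Filter.atTop, x N ∈ s) → s ∈ U :=
        fun s hs => hUle (Filter.mem_map.mpr hs)
      have hUK : K ∈ U := hmem_of_tail K (Filter.Eventually.of_forall fun N => (hx N).2)
      obtain ⟨y, hyK, hyU⟩ := hKc.ultrafilter_le_nhds U (Filter.le_principal_iff.mpr hUK)
      refine ⟨y, fun N => ?_⟩
      have hshU : sh N i ∈ U := by
        refine hmem_of_tail _ ?_
        refine Filter.eventually_atTop.mpr ⟨N, fun M hM => ?_⟩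
        have h1 : b (M + (N₀ + 1)) i ⊆ b (N + 1) i := hbdec (N + 1) (M + (N₀ + 1)) (by omega) i
        exact (hsh1 N i) (h1 (hx M).1)
      exact mem_closure_iff_ultrafilter.mpr ⟨U, hshU, hyU⟩
    · refine ⟨Classical.arbitrary (X i), fun N => ?_⟩
      rcases (hsh2 N i).2.2 with ⟨K, hK⟩ | ⟨hu, -⟩
      · exact absurd ⟨N, K, hK⟩ hcomp
      · rw [hu, closure_univ]
        trivial
  choose y hyspec using hy
  -- the point y lies in every set of the branch, contradiction with the cover
  have hyb : ∀ N, y ∈ Set.pi univ (b N) := by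
    intro N i _
    exact (hsh2 N i).2.1 (hyspec i N)
  have hyA : y ∈ Set.pi univ A :=
    (hPInv 0).2.1 (mem_punion.mpr ⟨b 0, hbmem 0, hyb 0⟩)
  have hyB : ∀ n, y ∉ Set.pi univ (B n) := by
    intro n hyn
    have hmem : y ∈ punion (P (n + 1)) := mem_punion.mpr ⟨b (n + 1), hbmem (n + 1), hyb (n + 1)⟩
    exact Set.disjoint_left.mp ((hPInv (n + 1)).2.2.1 n (Nat.lt_succ_self n)) hmem hyn
  obtain ⟨n, hn⟩ := Set.mem_iUnion.mp (hcov hyA)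
  exact hyB n hn

end MainLemma

end Measures

section FinalHelpers

variable {C : ∀ i, Set (X i)}

lemma datum_univ : IsCylinderDatum (fun _ => univ : ∀ i : ι, Set (X i)) := by
  refine ⟨fun i => MeasurableSet.univ, ?_⟩
  simp

lemma pi_univ_datum : Set.pi univ (fun _ => univ : ∀ i : ι, Set (X i)) = univ := by
  simp

lemma datum_measurableSet (hC : IsCylinderDatum C) : MeasurableSet (Set.pi univ C) := by
  classical
  have heq : Set.pi univ C = Set.pi (hC.2.toFinset : Set ι) C := by
    ext x
    simp only [Set.mem_pi, mem_univ, true_implies, Set.Finite.coe_toFinset, mem_setOf_eq]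
    constructor
    · intro h i _
      exact h i
    · intro h i
      by_cases hi : C i = univ
      · rw [hi]; trivial
      · exact h i hi
  rw [heq]
  exact MeasurableSet.pi (Set.Countable.mono (fun x hx => hx) (Set.Finite.countable
    (by simpa using hC.2))) (fun i _ => hC.1 i)

end FinalHelpers

end CouplingExt

open CouplingExt in
/-- Extension of a finitely additive, dominated set function on cylinder sets of a
product of regular Borel probability spaces to a unique Borel probability measure on
the product σ-algebra. -/
theorem coupling_extension {ι : Type*} {X : ι → Type*}
    [∀ i, TopologicalSpace (X i)] [∀ i, MeasurableSpace (X i)] [∀ i, BorelSpace (X i)]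
    (μi : ∀ i, Measure (X i)) [∀ i, IsProbabilityMeasure (μi i)]
    [∀ i, (μi i).InnerRegular] [∀ i, (μi i).OuterRegular]
    (μ : (∀ i, Set (X i)) → ENNReal)
    -- `μ` is a well-defined function on the semiring of cylinder sets:
    (hwd : ∀ A B : ∀ i, Set (X i), IsCylinderDatum A → IsCylinderDatum B →
      Set.pi univ A = Set.pi univ B → μ A = μ B)
    -- normalization (the extension is to be a probability measure):
    (hone : μ (fun _ => Set.univ) = 1)
    -- domination: `μ(∏ A_i) ≤ min_i μ_i (A_i)`:
    (hdom : ∀ A : ∀ i, Set (X i), IsCylinderDatum A → ∀ i, μ A ≤ μi i (A i))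
    -- finite additivity on the semiring of cylinder sets:
    (hadd : ∀ (A : ∀ i, Set (X i)) (n : ℕ) (B : Fin n → ∀ i, Set (X i)),
      IsCylinderDatum A → (∀ m, IsCylinderDatum (B m)) →
      Set.pi univ A = ⋃ m, Set.pi univ (B m) →
      (Pairwise fun m m' => Disjoint (Set.pi univ (B m)) (Set.pi univ (B m'))) →
      μ A = ∑ m, μ (B m)) :
    ∃! ν : Measure (∀ i, X i), IsProbabilityMeasure ν ∧
      ∀ A : ∀ i, Set (X i), IsCylinderDatum A → ν (Set.pi univ A) = μ A := by
  classical
  -- all coordinate spaces are nonempty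
  have hXne : ∀ i, Nonempty (X i) := by
    intro i
    by_contra h
    rw [not_nonempty_iff] at h
    have h1 : (μi i) univ = 1 := measure_univ
    rw [Set.univ_eq_empty_iff.mpr h, measure_empty] at h1
    exact zero_ne_one h1
  haveI : ∀ i, Nonempty (X i) := hXne
  rcases isEmpty_or_nonempty ι with hι | hι
  · -- degenerate case: `ι` is empty
    have hpiuniv : ∀ A : ∀ i, Set (X i), Set.pi univ A = univ :=
      fun A => eq_univ_of_forall fun x i _ => isEmptyElim i
    have hdatum_all : ∀ A : ∀ i, Set (X i), IsCylinderDatum A :=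
      fun A => ⟨fun i => isEmptyElim i, Set.toFinite _⟩
    have hμ_all : ∀ A : ∀ i, Set (X i), μ A = 1 := by
      intro A
      rw [← hone]
      exact hwd A _ (hdatum_all A) (hdatum_all _) (by rw [hpiuniv, hpiuniv])
    have huniq : ∀ t : Set (∀ i, X i), t = ∅ ∨ t = univ := by
      intro t
      rcases eq_empty_or_nonempty t with h | ⟨x, hx⟩
      · exact Or.inl h
      · refine Or.inr (eq_univ_of_forall fun z => ?_)
        have : z = x := funext fun i => isEmptyElim i
        rwa [this]
    haveI : Inhabited (∀ i, X i) := ⟨fun i => isEmptyElim i⟩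
    refine ⟨Measure.dirac default, ⟨inferInstance, fun A _ => ?_⟩, ?_⟩
    · rw [hpiuniv A, hμ_all A, measure_univ]
    · rintro ν' ⟨hν'p, -⟩
      refine Measure.ext fun t ht => ?_
      rcases huniq t with rfl | rfl
      · simp
      · rw [measure_univ, measure_univ]
  · -- main case
    haveI : Nonempty ι := hι
    -- the generating function of the outer measure
    set m : Set (∀ i, X i) → ENNReal :=
      fun t => ⨅ (C : ∀ i, Set (X i)) (_ : IsCylinderDatum C ∧ Set.pi univ C = t), μ C with hm
    have hm_cyl : ∀ C, IsCylinderDatum C → m (Set.pi univ C) = μ C := by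
      intro C hC
      refine le_antisymm (iInf₂_le C ⟨hC, rfl⟩) ?_
      refine le_iInf₂ fun B hB => ?_
      exact (hwd C B hC hB.1 hB.2.symm).le
    have hm_le : ∀ C, IsCylinderDatum C → ∀ t, Set.pi univ C = t → m t ≤ μ C :=
      fun C hC t ht => ht ▸ (hm_cyl C hC).le
    have hm_empty : m ∅ = 0 := by
      obtain ⟨i₀⟩ := hι
      set A₀ : ∀ i, Set (X i) := fun i => if i = i₀ then ∅ else univ with hA₀
      have hA₀datum : IsCylinderDatum A₀ := by
        constructor
        · intro i
          simp only [hA₀]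
          split_ifs
          · exact MeasurableSet.empty
          · exact MeasurableSet.univ
        · refine (Set.finite_singleton i₀).subset ?_
          intro i hi
          simp only [mem_setOf_eq, hA₀] at hi
          simp only [Set.mem_singleton_iff]
          by_contra h
          exact hi (by rw [if_neg h])
      have hA₀i₀ : A₀ i₀ = ∅ := by simp [hA₀]
      have hA₀empty : Set.pi univ A₀ = ∅ := Set.univ_pi_eq_empty hA₀i₀
      have h0 : μ A₀ = 0 := mu_of_coord_empty μi μ hdom hA₀datum hA₀i₀
      refine le_antisymm ?_ zero_le
      rw [← h0]
      exact hm_le A₀ hA₀datum ∅ hA₀empty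
    set ν₀ : OuterMeasure (∀ i, X i) := OuterMeasure.ofFunction m hm_empty with hν₀
    have hν₀_le : ∀ t, ν₀ t ≤ m t := fun t => OuterMeasure.ofFunction_le t
    have hν₀_le_cyl : ∀ C, IsCylinderDatum C → ν₀ (Set.pi univ C) ≤ μ C :=
      fun C hC => (hν₀_le _).trans (hm_cyl C hC).le
    -- the outer measure agrees with μ on cylinders
    have hν₀_cyl : ∀ C, IsCylinderDatum C → ν₀ (Set.pi univ C) = μ C := by
      intro C hC
      refine le_antisymm (hν₀_le_cyl C hC) ?_
      rw [hν₀, OuterMeasure.ofFunction_apply]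
      refine le_iInf₂ fun t ht => ?_
      by_cases htop : ∃ n, m (t n) = ⊤
      · obtain ⟨n, hn⟩ := htop
        calc μ C ≤ ⊤ := le_top
          _ = m (t n) := hn.symm
          _ ≤ ∑' n, m (t n) := ENNReal.le_tsum n
      · push_neg at htop
        have hrep : ∀ n, ∃ Bn, IsCylinderDatum Bn ∧ Set.pi univ Bn = t n ∧ m (t n) = μ Bn := by
          intro n
          by_cases hnonempty : ∃ Bn, IsCylinderDatum Bn ∧ Set.pi univ Bn = t n
          · obtain ⟨Bn, h1, h2⟩ := hnonempty
            exact ⟨Bn, h1, h2, by rw [← h2, hm_cyl Bn h1]⟩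
          · exfalso
            refine (htop n) (le_antisymm le_top ?_)
            refine le_iInf₂ fun B hB => ?_
            exact absurd (⟨B, hB.1, hB.2⟩ :
              ∃ Bn, IsCylinderDatum Bn ∧ Set.pi univ Bn = t n) hnonempty
        choose Bf hB1 hB2 hB3 using hrep
        have hcov : Set.pi univ C ⊆ ⋃ n, Set.pi univ (Bf n) := by
          refine ht.trans ?_
          refine Set.iUnion_mono fun n => ?_
          rw [hB2 n]
        calc μ C ≤ ∑' n, μ (Bf n) :=
              mu_sigma_subadd μi μ hwd hdom hadd C hC Bf hB1 hcov
          _ = ∑' n, m (t n) := tsum_congr fun n => (hB3 n).symm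
    -- finite subadditivity of the outer measure on packs
    have hν₀_punion : ∀ D : List (∀ i, Set (X i)), (∀ p ∈ D, IsCylinderDatum p) →
        ν₀ (punion D) ≤ pmass μ D := by
      intro D
      induction D with
      | nil => intro _; simp [punion_nil, pmass_nil]
      | cons p D ih =>
        intro hD
        rw [punion_cons, pmass_cons]
        calc ν₀ (Set.pi univ p ∪ punion D) ≤ ν₀ (Set.pi univ p) + ν₀ (punion D) :=
              measure_union_le _ _
          _ ≤ μ p + pmass μ D :=
              add_le_add (hν₀_le_cyl p (hD p (by simp))) (ih fun q hq => hD q (by simp [hq]))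
    -- Carathéodory measurability of cylinders
    have hcar : ∀ C, IsCylinderDatum C →
        MeasurableSet[ν₀.caratheodory] (Set.pi univ C) := by
      intro C hC
      rw [OuterMeasure.isCaratheodory_iff_le]
      intro t
      rw [hν₀, OuterMeasure.ofFunction_apply]
      refine le_iInf₂ fun f hf => ?_
      have h1 : ν₀ (t ∩ Set.pi univ C) ≤ ∑' n, ν₀ (f n ∩ Set.pi univ C) := by
        refine le_trans (measure_mono ?_) (measure_iUnion_le _)
        rw [← Set.iUnion_inter]
        exact Set.inter_subset_inter_left _ hf
      have h2 : ν₀ (t \ Set.pi univ C) ≤ ∑' n, ν₀ (f n \ Set.pi univ C) := by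
        refine le_trans (measure_mono ?_) (measure_iUnion_le _)
        rw [← Set.iUnion_diff]
        exact Set.diff_subset_diff_left hf
      have hkey : ∀ n, ν₀ (f n ∩ Set.pi univ C) + ν₀ (f n \ Set.pi univ C) ≤ m (f n) := by
        intro n
        by_cases htop : m (f n) = ⊤
        · rw [htop]; exact le_top
        · have hnonempty : ∃ Bn, IsCylinderDatum Bn ∧ Set.pi univ Bn = f n := by
            by_contra hc
            refine htop (le_antisymm le_top ?_)
            refine le_iInf₂ fun B hB => ?_
            exact absurd (⟨B, hB.1, hB.2⟩ :
              ∃ Bn, IsCylinderDatum Bn ∧ Set.pi univ Bn = f n) hc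
          obtain ⟨T, hTdatum, hTeq⟩ := hnonempty
          have hmT : m (f n) = μ T := by rw [← hTeq, hm_cyl T hTdatum]
          set P : ∀ i, Set (X i) := fun i => T i ∩ C i with hP
          have hPdatum : IsCylinderDatum P := datum_inter hTdatum hC
          have hPpi : Set.pi univ P = Set.pi univ T ∩ Set.pi univ C := pi_univ_inter
          have hPsub : ∀ i, P i ⊆ T i := fun i => inter_subset_left
          set sF : Finset ι := (hTdatum.2.union hPdatum.2).toFinset with hsF
          have hsT : ∀ i, i ∉ sF → T i = univ := by
            intro i hi
            simp only [hsF, Set.Finite.mem_toFinset, mem_union, mem_setOf_eq, not_or] at hi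
            exact not_ne_iff.mp hi.1
          have hsP : ∀ i, i ∉ sF → P i = univ := by
            intro i hi
            simp only [hsF, Set.Finite.mem_toFinset, mem_union, mem_setOf_eq, not_or] at hi
            exact not_ne_iff.mp hi.2
          obtain ⟨D, hDdatum, hDsub, hDpair, hDdisjP, hDunion, hDsum, -⟩ :=
            exists_diff_partition μi μ hdom hadd T P hTdatum hPdatum hPsub sF hsT hsP
          have hDun : punion D = Set.pi univ T \ Set.pi univ C := by
            ext x
            constructor
            · intro hx
              obtain ⟨q, hq, hxq⟩ := mem_punion.mp hx
              have hxT : x ∈ Set.pi univ T := pi_univ_mono (hDsub q hq) hxq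
              refine ⟨hxT, fun hxC => ?_⟩
              have hxP : x ∈ Set.pi univ P := hPpi.symm ▸ ⟨hxT, hxC⟩
              exact Set.disjoint_left.mp (hDdisjP q hq) hxq hxP
            · rintro ⟨hxT, hxC⟩
              have := hDunion ▸ hxT
              rcases this with hxP | hxD
              · exact absurd (hPpi ▸ hxP).2 hxC
              · exact hxD
          calc ν₀ (f n ∩ Set.pi univ C) + ν₀ (f n \ Set.pi univ C)
              = ν₀ (Set.pi univ P) + ν₀ (punion D) := by
                rw [hPpi, hDun, hTeq]
            _ ≤ μ P + pmass μ D :=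
                add_le_add (hν₀_le_cyl P hPdatum) (hν₀_punion D hDdatum)
            _ = μ T := hDsum.symm
            _ = m (f n) := hmT.symm
      calc ν₀ (t ∩ Set.pi univ C) + ν₀ (t \ Set.pi univ C)
          ≤ (∑' n, ν₀ (f n ∩ Set.pi univ C)) + ∑' n, ν₀ (f n \ Set.pi univ C) :=
            add_le_add h1 h2
        _ = ∑' n, (ν₀ (f n ∩ Set.pi univ C) + ν₀ (f n \ Set.pi univ C)) :=
            ENNReal.tsum_add.symm
        _ ≤ ∑' n, m (f n) := ENNReal.tsum_le_tsum hkey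
    -- the product σ-algebra is Carathéodory-measurable
    have hle : MeasurableSpace.pi ≤ ν₀.caratheodory := by
      rw [← generateFrom_squareCylinders]
      refine MeasurableSpace.generateFrom_le ?_
      rintro S ⟨sF, tset, htset, rfl⟩
      set A' : ∀ i, Set (X i) := fun i => if i ∈ sF then tset i else univ with hA'
      have hA'datum : IsCylinderDatum A' := by
        constructor
        · intro i
          simp only [hA']
          split_ifs with h
          · exact htset i (mem_univ i)
          · exact MeasurableSet.univ
        · refine sF.finite_toSet.subset ?_
          intro i hi
          simp only [mem_setOf_eq, hA'] at hi
          by_contra h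
          exact hi (by rw [if_neg (fun hm => h (Finset.mem_coe.mpr hm))])
      have heq : (sF : Set ι).pi tset = Set.pi univ A' := by
        ext x
        simp only [Set.mem_pi, mem_univ, true_implies, Finset.mem_coe, hA']
        constructor
        · intro h i
          split_ifs with hi
          · exact h i hi
          · trivial
        · intro h i hi
          have := h i
          rwa [if_pos hi] at this
      rw [heq]
      exact hcar A' hA'datum
    set ν : Measure (∀ i, X i) := ν₀.toMeasure hle with hν
    have hν_cyl : ∀ C, IsCylinderDatum C → ν (Set.pi univ C) = μ C := by
      intro C hC
      rw [hν, MeasureTheory.toMeasure_apply ν₀ hle (datum_measurableSet hC)]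
      exact hν₀_cyl C hC
    have hνuniv : ν univ = 1 := by
      have := hν_cyl (fun _ => univ) datum_univ
      rwa [pi_univ_datum, hone] at this
    haveI hνprob : IsProbabilityMeasure ν := ⟨hνuniv⟩
    refine ⟨ν, ⟨hνprob, fun A hA => hν_cyl A hA⟩, ?_⟩
    -- uniqueness
    rintro ν' ⟨hν'prob, hν'cyl⟩
    refine ext_of_generate_finite (squareCylinders fun i => {s : Set (X i) | MeasurableSet s})
      generateFrom_squareCylinders.symm
      (isPiSystem_squareCylinders (fun i s hs t ht _ => hs.inter ht)
        (fun i => MeasurableSet.univ)) ?_ ?_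
    · rintro S ⟨sF, tset, htset, rfl⟩
      set A' : ∀ i, Set (X i) := fun i => if i ∈ sF then tset i else univ with hA'
      have hA'datum : IsCylinderDatum A' := by
        constructor
        · intro i
          simp only [hA']
          split_ifs with h
          · exact htset i (mem_univ i)
          · exact MeasurableSet.univ
        · refine sF.finite_toSet.subset ?_
          intro i hi
          simp only [mem_setOf_eq, hA'] at hi
          by_contra h
          exact hi (by rw [if_neg (fun hm => h (Finset.mem_coe.mpr hm))])
      have heq : (sF : Set ι).pi tset = Set.pi univ A' := by
        ext x
        simp only [Set.mem_pi, mem_univ, true_implies, Finset.mem_coe, hA']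
        constructor
        · intro h i
          split_ifs with hi
          · exact h i hi
          · trivial
        · intro h i hi
          have := h i
          rwa [if_pos hi] at this
      rw [heq, hν'cyl A' hA'datum, hν_cyl A' hA'datum]
    · rw [measure_univ, hνuniv]
end

section
/- Let G be a topological group and f : G → ℂ a continuous function such that there exists a compact group K, a continuous homomorphism ι : G → K, and f' ∈ C(K) with f = f' ∘ ι. Then f is almost periodic, i.e., the set of all two-sided translates {g' ↦ f(h⁻¹ g' h') : h, h' ∈ G} is totally bounded in the supremum norm. -/
/-- A function `f : G → ℂ` is almost periodic if the set of its two-sided translates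
`{g' ↦ f (h⁻¹ * g' * h') : h, h' ∈ G}` is totally bounded with respect to the
supremum metric: for every `ε > 0` there is a finite family of translates that is
`ε`-dense (in the sup norm) in the set of all translates. -/
def IsAlmostPeriodic {G : Type*} [Group G] (f : G → ℂ) : Prop :=
  ∀ ε : ℝ, 0 < ε → ∃ s : Finset (G × G),
    ∀ h h' : G, ∃ p ∈ s, ∀ g : G, ‖f (h⁻¹ * g * h') - f (p.1⁻¹ * g * p.2)‖ ≤ ε

/-- A continuous function on a topological group that factors through a continuous
homomorphism into a compact group is almost periodic. -/
theorem almostPeriodic_of_factors_through_compact {G : Type*} [Group G] [TopologicalSpace G]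
    [IsTopologicalGroup G] (f : G → ℂ) (hf : Continuous f)
    (K : Type*) [Group K] [TopologicalSpace K] [IsTopologicalGroup K] [CompactSpace K]
    (ι : G →* K) (hι : Continuous ι) (f' : C(K, ℂ)) (hfactor : f = f' ∘ ι) :
    IsAlmostPeriodic f := by
  classical
  intro ε hε
  -- the translation map as a continuous map on the compact space K × K
  let Φ : C((K × K) × K, ℂ) :=
    ⟨fun q => f' (q.1.1⁻¹ * q.2 * q.1.2), by
      exact f'.continuous.comp
        (((continuous_fst.fst.inv).mul continuous_snd).mul continuous_fst.snd)⟩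
  let F : C(K × K, C(K, ℂ)) := Φ.curry
  -- the set of translates coming from G
  set S : Set C(K, ℂ) := F '' (Set.range fun p : G × G => (ι p.1, ι p.2)) with hS
  have hScompact : TotallyBounded S := by
    have : IsCompact (Set.range F) := isCompact_range F.continuous
    exact this.totallyBounded.subset (by
      rintro x ⟨y, -, rfl⟩; exact Set.mem_range_self y)
  have hmem := Metric.dist_mem_uniformity (α := C(K, ℂ)) hε
  obtain ⟨t, hts, htfin, hcov⟩ := (totallyBounded_iff_subset.mp hScompact) _ hmem
  -- choose preimages in G × G for each element of t
  have hchoice : ∀ x ∈ t, ∃ p : G × G, F (ι p.1, ι p.2) = x := by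
    intro x hx
    obtain ⟨y, ⟨p, rfl⟩, rfl⟩ := hts hx
    exact ⟨p, rfl⟩
  choose! pick hpick using hchoice
  obtain ⟨tf, htf⟩ := htfin.exists_finset_coe
  refine ⟨tf.image pick, ?_⟩
  intro h h'
  have hmemS : F (ι h, ι h') ∈ S := ⟨_, ⟨(h, h'), rfl⟩, rfl⟩
  obtain ⟨x, hxt, hdist⟩ := by
    have := hcov hmemS
    simpa using this
  refine ⟨pick x, Finset.mem_image_of_mem pick (by rwa [← htf] at hxt), ?_⟩
  intro g
  have key : dist (F (ι h, ι h')) (F (ι (pick x).1, ι (pick x).2)) < ε := by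
    rw [hpick x hxt]; exact hdist
  have := ContinuousMap.dist_apply_le_dist (f := F (ι h, ι h'))
    (g := F (ι (pick x).1, ι (pick x).2)) (ι g)
  have hle : dist (F (ι h, ι h') (ι g)) (F (ι (pick x).1, ι (pick x).2) (ι g)) ≤ ε :=
    this.trans key.le
  have e1 : F (ι h, ι h') (ι g) = f (h⁻¹ * g * h') := by
    simp [F, Φ, ContinuousMap.curry, hfactor, map_mul, map_inv]
  have e2 : F (ι (pick x).1, ι (pick x).2) (ι g) = f ((pick x).1⁻¹ * g * (pick x).2) := by
    simp [F, Φ, ContinuousMap.curry, hfactor, map_mul, map_inv]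
  rw [e1, e2] at hle
  simpa [dist_eq_norm] using hle
end

section
/- Let G be a topological group. Every matrix coefficient function g ↦ ⟨π(g)v, w⟩, where π : G → U(d) is a continuous finite-dimensional unitary representation and v, w ∈ ℂ^d, is an almost periodic function on G. Consequently every uniform limit of such matrix coefficients is almost periodic. -/
open scoped Matrix InnerProductSpace

/-- The matrix coefficient `g ↦ ⟨π(g)v, w⟩` of a continuous finite-dimensional unitary
representation `π : G → U(d)`. -/
noncomputable def matrixCoeff {G : Type*} [Group G] (d : ℕ)
    (π : G →* Matrix.unitaryGroup (Fin d) ℂ) (v w : Fin d → ℂ) : G → ℂ :=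
  fun g => ∑ i, star (w i) * ((π g : Matrix (Fin d) (Fin d) ℂ).mulVec v) i

namespace APaux

variable {d : ℕ}

noncomputable def ee (d : ℕ) (x : Fin d → ℂ) : EuclideanSpace ℂ (Fin d) :=
  (WithLp.equiv 2 (Fin d → ℂ)).symm x

lemma ee_sub (x y : Fin d → ℂ) : ee d (x - y) = ee d x - ee d y := rfl

lemma inner_ee (x y : Fin d → ℂ) : ⟪ee d x, ee d y⟫_ℂ = dotProduct (star x) y :=
  (EuclideanSpace.inner_toLp_toLp x y).trans (dotProduct_comm _ _)

lemma unitary_inner {U : Matrix (Fin d) (Fin d) ℂ} (hU : U ∈ Matrix.unitaryGroup (Fin d) ℂ)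
    (x y : Fin d → ℂ) : ⟪ee d (U *ᵥ x), ee d (U *ᵥ y)⟫_ℂ = ⟪ee d x, ee d y⟫_ℂ := by
  rw [inner_ee, inner_ee, Matrix.star_mulVec, Matrix.dotProduct_mulVec,
    Matrix.vecMul_vecMul, ← Matrix.star_eq_conjTranspose,
    (Matrix.mem_unitaryGroup_iff').mp hU, Matrix.vecMul_one]

lemma unitary_norm {U : Matrix (Fin d) (Fin d) ℂ} (hU : U ∈ Matrix.unitaryGroup (Fin d) ℂ)
    (x : Fin d → ℂ) : ‖ee d (U *ᵥ x)‖ = ‖ee d x‖ := by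
  have := unitary_inner hU x x
  rw [@norm_eq_sqrt_re_inner ℂ, @norm_eq_sqrt_re_inner ℂ, this]

lemma translate_eq (P Q R : Matrix (Fin d) (Fin d) ℂ) (v w : Fin d → ℂ) :
    dotProduct (star w) ((star P * Q * R) *ᵥ v) =
      dotProduct (star (P *ᵥ w)) (Q *ᵥ (R *ᵥ v)) := by
  rw [Matrix.star_mulVec, ← Matrix.dotProduct_mulVec, Matrix.mulVec_mulVec,
    Matrix.mulVec_mulVec, Matrix.star_eq_conjTranspose, mul_assoc]

lemma est {U : Matrix (Fin d) (Fin d) ℂ} (hU : U ∈ Matrix.unitaryGroup (Fin d) ℂ)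
    (v₁ w₁ v₂ w₂ : Fin d → ℂ) :
    ‖dotProduct (star w₁) (U *ᵥ v₁) - dotProduct (star w₂) (U *ᵥ v₂)‖ ≤
      ‖ee d w₁ - ee d w₂‖ * ‖ee d v₁‖ + ‖ee d w₂‖ * ‖ee d v₁ - ee d v₂‖ := by
  rw [← inner_ee, ← inner_ee]
  have key : ⟪ee d w₁, ee d (U *ᵥ v₁)⟫_ℂ - ⟪ee d w₂, ee d (U *ᵥ v₂)⟫_ℂ =
      ⟪ee d w₁ - ee d w₂, ee d (U *ᵥ v₁)⟫_ℂ +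
        ⟪ee d w₂, ee d (U *ᵥ v₁) - ee d (U *ᵥ v₂)⟫_ℂ := by
    rw [inner_sub_left, inner_sub_right]; ring
  rw [key]
  have hv : ‖ee d (U *ᵥ v₁) - ee d (U *ᵥ v₂)‖ = ‖ee d v₁ - ee d v₂‖ := by
    rw [← ee_sub, ← Matrix.mulVec_sub, unitary_norm hU, ee_sub]
  calc _ ≤ ‖⟪ee d w₁ - ee d w₂, ee d (U *ᵥ v₁)⟫_ℂ‖ +
        ‖⟪ee d w₂, ee d (U *ᵥ v₁) - ee d (U *ᵥ v₂)⟫_ℂ‖ := norm_add_le _ _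
    _ ≤ ‖ee d w₁ - ee d w₂‖ * ‖ee d (U *ᵥ v₁)‖ +
        ‖ee d w₂‖ * ‖ee d (U *ᵥ v₁) - ee d (U *ᵥ v₂)‖ :=
      add_le_add (norm_inner_le_norm _ _) (norm_inner_le_norm _ _)
    _ = _ := by rw [unitary_norm hU, hv]

lemma coeff_eq_dot {G : Type*} [Group G] (d : ℕ) (π : G →* Matrix.unitaryGroup (Fin d) ℂ)
    (v w : Fin d → ℂ) (g : G) :
    matrixCoeff d π v w g = dotProduct (star w) ((π g : Matrix (Fin d) (Fin d) ℂ) *ᵥ v) :=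
  rfl

lemma coeff_translate {G : Type*} [Group G] (d : ℕ) (π : G →* Matrix.unitaryGroup (Fin d) ℂ)
    (v w : Fin d → ℂ) (h g h' : G) :
    matrixCoeff d π v w (h⁻¹ * g * h') =
      dotProduct (star ((π h : Matrix (Fin d) (Fin d) ℂ) *ᵥ w))
        ((π g : Matrix (Fin d) (Fin d) ℂ) *ᵥ ((π h' : Matrix (Fin d) (Fin d) ℂ) *ᵥ v)) := by
  rw [coeff_eq_dot, ← translate_eq]
  congr 1
  rw [map_mul, map_mul, map_inv]
  rfl

lemma part1 {G : Type*} [Group G] (d : ℕ) (π : G →* Matrix.unitaryGroup (Fin d) ℂ)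
    (v w : Fin d → ℂ) : IsAlmostPeriodic (matrixCoeff d π v w) := by
  intro ε hε
  set R : ℝ := ‖ee d v‖ + ‖ee d w‖ + 1 with hR
  have hRpos : 0 < R := by positivity
  set δ : ℝ := ε / R with hδdef
  have hδ : 0 < δ := div_pos hε hRpos
  set F : G × G → EuclideanSpace ℂ (Fin d) × EuclideanSpace ℂ (Fin d) :=
    fun p => (ee d ((π p.1 : Matrix (Fin d) (Fin d) ℂ) *ᵥ w),
      ee d ((π p.2 : Matrix (Fin d) (Fin d) ℂ) *ᵥ v)) with hF
  have htb : TotallyBounded (Set.range F) := by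
    refine TotallyBounded.subset ?_
      (((isCompact_closedBall (0 : EuclideanSpace ℂ (Fin d)) ‖ee d w‖).prod
        (isCompact_closedBall (0 : EuclideanSpace ℂ (Fin d)) ‖ee d v‖)).totallyBounded)
    rintro _ ⟨p, rfl⟩
    constructor
    · simpa [hF, mem_closedBall_zero_iff] using (unitary_norm (π p.1).2 w).le
    · simpa [hF, mem_closedBall_zero_iff] using (unitary_norm (π p.2).2 v).le
  obtain ⟨t, htK, htfin, hcov⟩ :=
    totallyBounded_iff_subset.mp htb _ (Metric.dist_mem_uniformity hδ)
  have hchoice : ∀ y : EuclideanSpace ℂ (Fin d) × EuclideanSpace ℂ (Fin d),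
      ∃ p : G × G, y ∈ t → F p = y := by
    intro y
    by_cases hy : y ∈ t
    · exact (htK hy).imp fun p hp _ => hp
    · exact ⟨(1, 1), fun h => absurd h hy⟩
  classical
  choose φ hφ using hchoice
  refine ⟨htfin.toFinset.image φ, fun h h' => ?_⟩
  have hmem := hcov (Set.mem_range_self (h, h'))
  rw [Set.mem_iUnion₂] at hmem
  obtain ⟨y, hy, hdist⟩ := hmem
  refine ⟨φ y, Finset.mem_image_of_mem _ (htfin.mem_toFinset.mpr hy), fun g => ?_⟩
  have hFy : F (φ y) = y := hφ y hy
  have hdist' : dist (F (h, h')) (F (φ y)) < δ := by rwa [hFy]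
  rw [Prod.dist_eq] at hdist'
  have hd1 : ‖(F (h, h')).1 - (F (φ y)).1‖ ≤ δ :=
    by rw [← dist_eq_norm]; exact (le_max_left _ _).trans hdist'.le
  have hd2 : ‖(F (h, h')).2 - (F (φ y)).2‖ ≤ δ :=
    by rw [← dist_eq_norm]; exact (le_max_right _ _).trans hdist'.le
  rw [coeff_translate, coeff_translate]
  calc ‖_ - _‖ ≤ ‖ee d ((π h : Matrix (Fin d) (Fin d) ℂ) *ᵥ w) -
          ee d ((π (φ y).1 : Matrix (Fin d) (Fin d) ℂ) *ᵥ w)‖ *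
          ‖ee d ((π h' : Matrix (Fin d) (Fin d) ℂ) *ᵥ v)‖ +
        ‖ee d ((π (φ y).1 : Matrix (Fin d) (Fin d) ℂ) *ᵥ w)‖ *
          ‖ee d ((π h' : Matrix (Fin d) (Fin d) ℂ) *ᵥ v) -
            ee d ((π (φ y).2 : Matrix (Fin d) (Fin d) ℂ) *ᵥ v)‖ := est (π g).2 _ _ _ _
    _ ≤ δ * ‖ee d v‖ + ‖ee d w‖ * δ := by
        refine add_le_add (mul_le_mul hd1 (unitary_norm (π h').2 v).le (norm_nonneg _)
            hδ.le) ?_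
        rw [unitary_norm (π (φ y).1).2 w]
        exact mul_le_mul_of_nonneg_left hd2 (norm_nonneg _)
    _ ≤ δ * R := by rw [hR]; nlinarith [norm_nonneg (ee d v), norm_nonneg (ee d w), hδ.le]
    _ = ε := by rw [hδdef]; field_simp

end APaux

/-- Every matrix coefficient of a continuous finite-dimensional unitary representation
is almost periodic; consequently, every uniform limit of matrix coefficients is
almost periodic. -/
theorem matrixCoeff_almostPeriodic {G : Type*} [Group G] [TopologicalSpace G]
    [IsTopologicalGroup G] :
    (∀ (d : ℕ) (π : G →* Matrix.unitaryGroup (Fin d) ℂ),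
      Continuous (fun g => (π g : Matrix (Fin d) (Fin d) ℂ)) →
      ∀ v w : Fin d → ℂ, IsAlmostPeriodic (matrixCoeff d π v w)) ∧
    (∀ f : G → ℂ,
      (∀ ε : ℝ, 0 < ε → ∃ (d : ℕ) (π : G →* Matrix.unitaryGroup (Fin d) ℂ)
        (_ : Continuous (fun g => (π g : Matrix (Fin d) (Fin d) ℂ))) (v w : Fin d → ℂ),
        ∀ g : G, ‖f g - matrixCoeff d π v w g‖ ≤ ε) →
      IsAlmostPeriodic f) := by
  constructor
  · intro d π _ v w
    exact APaux.part1 d π v w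
  · intro f hf ε hε
    have hε3 : 0 < ε / 3 := by positivity
    obtain ⟨d, π, _, v, w, hvw⟩ := hf (ε / 3) hε3
    obtain ⟨s, hs⟩ := APaux.part1 d π v w (ε / 3) hε3
    refine ⟨s, fun h h' => ?_⟩
    obtain ⟨p, hp, hpg⟩ := hs h h'
    refine ⟨p, hp, fun g => ?_⟩
    have key : f (h⁻¹ * g * h') - f (p.1⁻¹ * g * p.2) =
        (f (h⁻¹ * g * h') - matrixCoeff d π v w (h⁻¹ * g * h')) +
        (matrixCoeff d π v w (h⁻¹ * g * h') - matrixCoeff d π v w (p.1⁻¹ * g * p.2)) +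
        (matrixCoeff d π v w (p.1⁻¹ * g * p.2) - f (p.1⁻¹ * g * p.2)) := by ring
    calc ‖f (h⁻¹ * g * h') - f (p.1⁻¹ * g * p.2)‖
        ≤ ‖f (h⁻¹ * g * h') - matrixCoeff d π v w (h⁻¹ * g * h')‖ +
          ‖matrixCoeff d π v w (h⁻¹ * g * h') - matrixCoeff d π v w (p.1⁻¹ * g * p.2)‖ +
          ‖matrixCoeff d π v w (p.1⁻¹ * g * p.2) - f (p.1⁻¹ * g * p.2)‖ := by
            rw [key]; exact norm_add₃_le
      _ ≤ ε / 3 + ε / 3 + ε / 3 := by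
            refine add_le_add (add_le_add (hvw _) (hpg g)) ?_
            rw [norm_sub_rev]; exact hvw _
      _ = ε := by ring
end

section
/- Let (X, μ) be a probability space with two commuting measure-preserving actions T₁, T₂ of an amenable group G, and let I₁, I₂ be the respective invariant σ-algebras. If in addition the joint action generated by T₁ and T₂ is ergodic (I₁ ∧ I₂ is trivial), then for all f₁ ∈ L^∞(I₁) and f₂ ∈ L^∞(I₂), ∫ f₁ f₂ dμ = ∫ f₁ dμ · ∫ f₂ dμ, i.e., I₁ and I₂ are independent. -/
open MeasureTheory Filter Topology
open scoped symmDiff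

/-- A left Følner sequence of finite subsets of a group. -/
def IsFolner {G : Type*} [Group G] [DecidableEq G] (F : ℕ → Finset G) : Prop :=
  (∀ N, (F N).Nonempty) ∧ ∀ g : G,
    Tendsto (fun N => (((((F N).image (fun x => g * x))) ∆ (F N)).card : ℝ) / (F N).card)
      atTop (𝓝 0)

/-- The σ-algebra of sets invariant under an action `T : G → X → X`. -/
def invariantSigma {G X : Type*} [MeasurableSpace X] (T : G → X → X) : MeasurableSpace X where
  MeasurableSet' s := MeasurableSet s ∧ ∀ g, T g ⁻¹' s = s
  measurableSet_empty := ⟨MeasurableSet.empty, fun g => by simp⟩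
  measurableSet_compl s hs := ⟨hs.1.compl, fun g => by
    rw [Set.preimage_compl, hs.2 g]⟩
  measurableSet_iUnion f hf := ⟨MeasurableSet.iUnion (fun n => (hf n).1), fun g => by
    simp only [Set.preimage_iUnion]
    exact Set.iUnion_congr fun n => (hf n).2 g⟩


lemma invariant_of_measurable {G X : Type*} [MeasurableSpace X] {T : G → X → X} {f : X → ℝ}
    (hf : Measurable[invariantSigma T] f) (g : G) (x : X) : f (T g x) = f x := by
  have hs : MeasurableSet[invariantSigma T] (f ⁻¹' {f x}) :=
    hf (measurableSet_singleton (f x))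
  have h2 : T g ⁻¹' (f ⁻¹' {f x}) = f ⁻¹' {f x} := hs.2 g
  have hx : x ∈ f ⁻¹' {f x} := rfl
  rw [← h2] at hx
  exact hx

lemma limsup_le_limsup_of_tendsto_sub {a b : ℕ → ℝ} {C : ℝ} (ha : ∀ n, |a n| ≤ C)
    (hb : ∀ n, |b n| ≤ C) (h : Tendsto (fun n => a n - b n) atTop (𝓝 0)) :
    limsup a atTop ≤ limsup b atTop := by
  have hbbd : IsBoundedUnder (· ≤ ·) atTop b := ⟨C, eventually_map.2 <| Eventually.of_forall
    fun n => (abs_le.1 (hb n)).2⟩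
  have hbcb : IsCoboundedUnder (· ≤ ·) atTop b :=
    IsBoundedUnder.isCoboundedUnder_le ⟨-C, eventually_map.2 <| Eventually.of_forall
      fun n => (abs_le.1 (hb n)).1⟩
  have hacb : IsCoboundedUnder (· ≤ ·) atTop a :=
    IsBoundedUnder.isCoboundedUnder_le ⟨-C, eventually_map.2 <| Eventually.of_forall
      fun n => (abs_le.1 (ha n)).1⟩
  refine le_of_forall_pos_le_add fun ε hε => ?_
  have hev : ∀ᶠ n in atTop, a n ≤ b n + ε := by
    filter_upwards [h.eventually (gt_mem_nhds hε)] with n hn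
    linarith
  calc limsup a atTop ≤ limsup (fun n => b n + ε) atTop := by
        refine limsup_le_limsup hev hacb ?_
        exact ⟨C + ε, eventually_map.2 <| Eventually.of_forall fun n =>
          add_le_add_left (abs_le.1 (hb n)).2 ε⟩
    _ = limsup b atTop + ε := limsup_add_const atTop b ε hbbd hbcb

lemma limsup_eq_limsup_of_tendsto_sub {a b : ℕ → ℝ} {C : ℝ} (ha : ∀ n, |a n| ≤ C)
    (hb : ∀ n, |b n| ≤ C) (h : Tendsto (fun n => a n - b n) atTop (𝓝 0)) :
    limsup a atTop = limsup b atTop := by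
  refine le_antisymm (limsup_le_limsup_of_tendsto_sub ha hb h)
    (limsup_le_limsup_of_tendsto_sub hb ha ?_)
  have := h.neg
  simpa [neg_sub] using this


/-- If moreover the joint action spanned by `T₁` and `T₂` is ergodic (every set
invariant under both actions has measure `0` or `1`), then the invariant σ-algebras
`I₁` and `I₂` are independent: `∫ f₁ f₂ dμ = ∫ f₁ dμ · ∫ f₂ dμ` for bounded `f₁`
measurable w.r.t. `I₁` and `f₂` measurable w.r.t. `I₂`. -/
theorem invariant_sigma_indep_of_jointly_ergodic {G : Type*} [Group G] [DecidableEq G]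
    (hamen : ∃ F : ℕ → Finset G, IsFolner F)
    {X : Type*} [MeasurableSpace X] (μ : Measure X) [IsProbabilityMeasure μ]
    (T₁ T₂ : G → X → X)
    (h1 : ∀ g, MeasurePreserving (T₁ g) μ μ) (h2 : ∀ g, MeasurePreserving (T₂ g) μ μ)
    (hact1 : ∀ g g' x, T₁ (g * g') x = T₁ g (T₁ g' x))
    (hact2 : ∀ g g' x, T₂ (g * g') x = T₂ g (T₂ g' x))
    (hid1 : ∀ x, T₁ 1 x = x) (hid2 : ∀ x, T₂ 1 x = x)
    (hcomm : ∀ g g' x, T₁ g (T₂ g' x) = T₂ g' (T₁ g x))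
    (herg : ∀ s : Set X, MeasurableSet s → (∀ g, T₁ g ⁻¹' s = s) → (∀ g, T₂ g ⁻¹' s = s) →
      μ s = 0 ∨ μ s = 1)
    (f₁ f₂ : X → ℝ)
    (hf₁ : Measurable[invariantSigma T₁] f₁) (hf₂ : Measurable[invariantSigma T₂] f₂)
    (hb₁ : ∃ C, ∀ x, |f₁ x| ≤ C) (hb₂ : ∃ C, ∀ x, |f₂ x| ≤ C) :
    ∫ x, f₁ x * f₂ x ∂μ = (∫ x, f₁ x ∂μ) * (∫ x, f₂ x ∂μ) := by
  classical
  obtain ⟨F, hFne, hFol⟩ := hamen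
  obtain ⟨C₁, hC₁⟩ := hb₁
  obtain ⟨C₂', hC₂'⟩ := hb₂
  set C : ℝ := max C₂' 0 with hCdef
  have hC0 : 0 ≤ C := le_max_right _ _
  have hC₂ : ∀ x, |f₂ x| ≤ C := fun x => (hC₂' x).trans (le_max_left _ _)
  have hm : invariantSigma T₁ ≤ ‹MeasurableSpace X› := fun s hs => hs.1
  have hmf₁ : Measurable f₁ := hf₁.mono hm le_rfl
  have hmf₂ : Measurable f₂ := hf₂.mono (fun s hs => hs.1) le_rfl
  have hint₂ : Integrable f₂ μ := by
    refine (integrable_const C).mono' hmf₂.aestronglyMeasurable ?_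
    exact Eventually.of_forall fun x => by simpa [Real.norm_eq_abs] using hC₂ x
  have hint₁₂ : Integrable (fun x => f₁ x * f₂ x) μ := by
    refine Integrable.bdd_mul (c := C₁) hint₂ hmf₁.aestronglyMeasurable ?_
    exact Eventually.of_forall fun x => by simpa [Real.norm_eq_abs] using hC₁ x
  have hf₂inv : ∀ g x, f₂ (T₂ g x) = f₂ x := fun g x => invariant_of_measurable hf₂ g x
  set h : X → ℝ := μ[f₂ | invariantSigma T₁] with hhdef
  have hhsm : StronglyMeasurable[invariantSigma T₁] h := stronglyMeasurable_condExp
  have hhinv1 : ∀ g x, h (T₁ g x) = h x := fun g x =>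
    invariant_of_measurable hhsm.measurable g x
  have hhm : Measurable h := (hhsm.mono hm).measurable
  have hinth : Integrable h μ := integrable_condExp
  -- bound on h
  have hhbd : ∀ᵐ x ∂μ, |h x| ≤ C := by
    have hb : ∀ᵐ x ∂μ, |f₂ x| ≤ (C.toNNReal : ℝ) := by
      refine Eventually.of_forall fun x => ?_
      rw [Real.coe_toNNReal C hC0]; exact hC₂ x
    have := ae_bdd_condExp_of_ae_bdd (m := invariantSigma T₁) hb
    filter_upwards [this] with x hx
    rwa [Real.coe_toNNReal C hC0] at hx
  -- T₂ g is a measurable embedding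
  have hemb : ∀ g : G, MeasurableEmbedding (T₂ g) := by
    intro g
    exact MeasurableEquiv.measurableEmbedding
      { toFun := T₂ g
        invFun := T₂ g⁻¹
        left_inv := fun x => by rw [← hact2, inv_mul_cancel, hid2]
        right_inv := fun x => by rw [← hact2, mul_inv_cancel, hid2]
        measurable_toFun := (h2 g).measurable
        measurable_invFun := (h2 g⁻¹).measurable }
  -- T₂ g is measurable w.r.t. the invariant σ-algebra of T₁
  have hT₂I₁ : ∀ g : G, @Measurable X X (invariantSigma T₁) (invariantSigma T₁) (T₂ g) := by
    intro g s hs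
    refine ⟨(h2 g).measurable hs.1, fun g' => ?_⟩
    have : ∀ x, T₂ g (T₁ g' x) = T₁ g' (T₂ g x) := fun x => (hcomm g' g x).symm
    calc T₁ g' ⁻¹' (T₂ g ⁻¹' s) = (fun x => T₂ g (T₁ g' x)) ⁻¹' s := rfl
      _ = (fun x => T₁ g' (T₂ g x)) ⁻¹' s := by simp only [this]
      _ = T₂ g ⁻¹' (T₁ g' ⁻¹' s) := rfl
      _ = T₂ g ⁻¹' s := by rw [hs.2 g']
  -- h ∘ T₂ g = h almost everywhere
  have hcompT₂ : ∀ g : G, (fun x => h (T₂ g x)) =ᵐ[μ] h := by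
    intro g
    refine ae_eq_condExp_of_forall_setIntegral_eq hm hint₂ ?_ ?_ ?_
    · intro s _ _
      exact (((h2 g).integrable_comp hhm.aestronglyMeasurable).2 hinth).integrableOn
    · intro s hs _
      have hs1 : MeasurableSet s := hs.1
      have hsinv : ∀ g', T₁ g' ⁻¹' s = s := hs.2
      set t : Set X := T₂ g⁻¹ ⁻¹' s with htdef
      have hts : T₂ g ⁻¹' t = s := by
        ext x
        simp only [htdef, Set.mem_preimage]
        rw [← hact2, inv_mul_cancel, hid2]
      have htI : MeasurableSet[invariantSigma T₁] t := hT₂I₁ g⁻¹ hs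
      calc ∫ x in s, h (T₂ g x) ∂μ
          = ∫ x in T₂ g ⁻¹' t, h (T₂ g x) ∂μ := by rw [hts]
        _ = ∫ y in t, h y ∂μ := (h2 g).setIntegral_preimage_emb (hemb g) _ _
        _ = ∫ y in t, f₂ y ∂μ := setIntegral_condExp hm hint₂ htI
        _ = ∫ x in T₂ g ⁻¹' t, f₂ (T₂ g x) ∂μ :=
            ((h2 g).setIntegral_preimage_emb (hemb g) _ _).symm
        _ = ∫ x in s, f₂ x ∂μ := by rw [hts]; simp_rw [hf₂inv g]
    · exact (hhsm.comp_measurable (hT₂I₁ g) : StronglyMeasurable[invariantSigma T₁] (fun x => h (T₂ g x))).aestronglyMeasurable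
  -- truncation of h
  set h' : X → ℝ := fun x => max (-C) (min C (h x)) with hh'def
  have hh'eq : h' =ᵐ[μ] h := by
    filter_upwards [hhbd] with x hx
    simp only [hh'def]
    rw [min_eq_right (abs_le.1 hx).2, max_eq_right (abs_le.1 hx).1]
  have hh'bd : ∀ x, |h' x| ≤ C := by
    intro x
    rw [abs_le]
    exact ⟨le_max_left _ _, max_le (by linarith) (min_le_left _ _)⟩
  have hh'inv1 : ∀ g x, h' (T₁ g x) = h' x := by
    intro g x; simp only [hh'def]; rw [hhinv1 g x]
  have hh'm : Measurable h' := measurable_const.max (measurable_const.min hhm)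
  have hh'comp : ∀ g : G, (fun x => h' (T₂ g x)) =ᵐ[μ] h' := by
    intro g
    filter_upwards [hcompT₂ g] with x hx
    simp only [hh'def]
    rw [hx]
  -- Følner averages
  set A : ℕ → X → ℝ := fun N x => (∑ g ∈ F N, h' (T₂ g⁻¹ x)) / (F N).card with hAdef
  have hcardpos : ∀ N, (0:ℝ) < (F N).card := by
    intro N; exact_mod_cast (hFne N).card_pos
  have hA_bd : ∀ (N) (x), |A N x| ≤ C := by
    intro N x
    simp only [hAdef]
    rw [abs_div, abs_of_pos (hcardpos N), div_le_iff₀ (hcardpos N)]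
    calc |∑ g ∈ F N, h' (T₂ g⁻¹ x)| ≤ ∑ g ∈ F N, |h' (T₂ g⁻¹ x)| :=
          Finset.abs_sum_le_sum_abs _ _
      _ ≤ ∑ _g ∈ F N, C := Finset.sum_le_sum fun g _ => hh'bd _
      _ = (F N).card * C := by rw [Finset.sum_const, nsmul_eq_mul]
      _ = C * (F N).card := mul_comm _ _
  have hA_meas : ∀ N, Measurable (A N) := by
    intro N
    exact (Finset.measurable_sum (F N) fun g _ => hh'm.comp (h2 g⁻¹).measurable).div_const _
  have hA_ae : ∀ N, A N =ᵐ[μ] h' := by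
    intro N
    have hball : ∀ᵐ x ∂μ, ∀ g ∈ (F N : Set G), h' (T₂ g⁻¹ x) = h' x :=
      (ae_ball_iff (F N).countable_toSet).2 fun g _ => hh'comp g⁻¹
    filter_upwards [hball] with x hx
    simp only [hAdef]
    rw [Finset.sum_congr rfl fun g hg => hx g hg, Finset.sum_const, nsmul_eq_mul,
      mul_comm, mul_div_assoc, div_self (ne_of_gt (hcardpos N)), mul_one]
  -- the limsup of the averages
  set hstar : X → ℝ := fun x => limsup (fun N => A N x) atTop with hstardef
  have hstar_meas : Measurable hstar := Measurable.limsup hA_meas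
  have hstar_ae : hstar =ᵐ[μ] h' := by
    have hall : ∀ᵐ x ∂μ, ∀ N, A N x = h' x := ae_all_iff.2 hA_ae
    filter_upwards [hall] with x hx
    simp only [hstardef]
    have : (fun N => A N x) = fun _ => h' x := funext hx
    rw [this, limsup_const]
  have hstar_bd : ∀ x, |hstar x| ≤ C := by
    intro x
    rw [abs_le]
    constructor
    · exact le_limsup_of_frequently_le
        (Frequently.of_forall fun N => (abs_le.1 (hA_bd N x)).1)
        ⟨C, eventually_map.2 <| Eventually.of_forall fun N => (abs_le.1 (hA_bd N x)).2⟩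
    · exact limsup_le_of_le
        (IsBoundedUnder.isCoboundedUnder_le
          ⟨-C, eventually_map.2 <| Eventually.of_forall fun N => (abs_le.1 (hA_bd N x)).1⟩)
        (Eventually.of_forall fun N => (abs_le.1 (hA_bd N x)).2)
  have hstar_inv1 : ∀ g x, hstar (T₁ g x) = hstar x := by
    intro g x
    simp only [hstardef]
    congr 1
    funext N
    simp only [hAdef]
    congr 1
    refine Finset.sum_congr rfl fun g' _ => ?_
    rw [← hcomm g g'⁻¹ x, hh'inv1]
  have hstar_inv2 : ∀ g₀ x, hstar (T₂ g₀ x) = hstar x := by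
    intro g₀ x
    simp only [hstardef]
    refine limsup_eq_limsup_of_tendsto_sub (C := C)
      (fun N => hA_bd N (T₂ g₀ x)) (fun N => hA_bd N x) ?_
    have hbound : ∀ N, |A N (T₂ g₀ x) - A N x| ≤
        C * ((((F N).image (fun y => g₀⁻¹ * y)) ∆ (F N)).card / (F N).card) := by
      intro N
      set B : Finset G := (F N).image (fun y => g₀⁻¹ * y) with hBdef
      set φ : G → ℝ := fun u => h' (T₂ u⁻¹ x) with hφdef
      have hre : A N (T₂ g₀ x) = (∑ u ∈ B, φ u) / (F N).card := by
        simp only [hAdef, hBdef]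
        congr 1
        rw [Finset.sum_image (fun a _ b _ hab => mul_left_cancel hab)]
        refine Finset.sum_congr rfl fun g hg => ?_
        simp only [hφdef, mul_inv_rev, inv_inv]
        rw [← hact2]
      have hre2 : A N x = (∑ u ∈ F N, φ u) / (F N).card := rfl
      rw [hre, hre2, div_sub_div_same, ← Finset.sum_sdiff_sub_sum_sdiff]
      rw [abs_div, abs_of_pos (hcardpos N), div_le_iff₀ (hcardpos N)]
      have habs : |∑ u ∈ B \ F N, φ u - ∑ u ∈ F N \ B, φ u| ≤
          ((B \ F N).card + (F N \ B).card : ℝ) * C := by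
        calc |∑ u ∈ B \ F N, φ u - ∑ u ∈ F N \ B, φ u|
            ≤ |∑ u ∈ B \ F N, φ u| + |∑ u ∈ F N \ B, φ u| := abs_sub _ _
          _ ≤ (∑ u ∈ B \ F N, |φ u|) + ∑ u ∈ F N \ B, |φ u| :=
              add_le_add (Finset.abs_sum_le_sum_abs _ _) (Finset.abs_sum_le_sum_abs _ _)
          _ ≤ (∑ _u ∈ B \ F N, C) + ∑ _u ∈ F N \ B, C :=
              add_le_add (Finset.sum_le_sum fun u _ => hh'bd _)
                (Finset.sum_le_sum fun u _ => hh'bd _)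
          _ = ((B \ F N).card + (F N \ B).card : ℝ) * C := by
              rw [Finset.sum_const, Finset.sum_const, nsmul_eq_mul, nsmul_eq_mul, add_mul]
      have hcardsym : ((B ∆ F N).card : ℝ) = (B \ F N).card + (F N \ B).card := by
        have : B ∆ F N = (B \ F N) ∪ (F N \ B) := by
          rw [symmDiff_def, Finset.sup_eq_union]
        rw [this, Finset.card_union_of_disjoint disjoint_sdiff_sdiff]
        push_cast; ring
      calc |∑ u ∈ B \ F N, φ u - ∑ u ∈ F N \ B, φ u|
          ≤ ((B \ F N).card + (F N \ B).card : ℝ) * C := habs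
        _ = C * ((B ∆ F N).card : ℝ) := by rw [hcardsym]; ring
        _ = C * (((B ∆ F N).card : ℝ) / (F N).card) * (F N).card := by
            field_simp
    have htend : Tendsto
        (fun N => C * ((((F N).image (fun y => g₀⁻¹ * y)) ∆ (F N)).card / ((F N).card : ℝ)))
        atTop (𝓝 0) := by
      have := (hFol g₀⁻¹).const_mul C
      simpa using this
    have habs0 : Tendsto (fun N => |A N (T₂ g₀ x) - A N x|) atTop (𝓝 0) :=
      squeeze_zero (fun N => abs_nonneg _) hbound htend
    exact tendsto_zero_iff_abs_tendsto_zero _ |>.2 habs0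
  -- joint ergodicity: level sets of hstar are trivial
  have hkey : ∀ r : ℝ, μ {x | hstar x ≤ r} = 0 ∨ μ {x | hstar x ≤ r} = 1 := by
    intro r
    refine herg _ (measurableSet_le hstar_meas measurable_const) ?_ ?_
    · intro g; ext x
      simp only [Set.mem_preimage, Set.mem_setOf_eq, hstar_inv1 g x]
    · intro g; ext x
      simp only [Set.mem_preimage, Set.mem_setOf_eq, hstar_inv2 g x]
  -- hstar is a.e. constant
  set Acon : Set ℝ := {r : ℝ | μ {x | hstar x ≤ r} = 1} with hAcon
  have hCin : C ∈ Acon := by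
    have huniv : {x | hstar x ≤ C} = Set.univ :=
      Set.eq_univ_of_forall fun x => (abs_le.1 (hstar_bd x)).2
    simp only [hAcon, Set.mem_setOf_eq, huniv, measure_univ]
  have hAbdd : BddBelow Acon := by
    refine ⟨-C - 1, fun r hr => ?_⟩
    by_contra hlt
    push_neg at hlt
    have hempty : {x | hstar x ≤ r} = ∅ := by
      ext x
      simp only [Set.mem_setOf_eq, Set.mem_empty_iff_false, iff_false, not_le]
      have := (abs_le.1 (hstar_bd x)).1
      linarith
    rw [hAcon] at hr
    simp only [Set.mem_setOf_eq, hempty, measure_empty] at hr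
    exact zero_ne_one hr
  have hmono : ∀ r r', r ∈ Acon → r ≤ r' → r' ∈ Acon := by
    intro r r' hr hle
    rcases hkey r' with h0 | h1
    · exfalso
      have hsub : {x | hstar x ≤ r} ⊆ {x | hstar x ≤ r'} := fun x hx => le_trans hx hle
      have hr' : μ {x | hstar x ≤ r} = 1 := hr
      have hle2 : μ {x | hstar x ≤ r} ≤ μ {x | hstar x ≤ r'} := measure_mono hsub
      rw [hr', h0] at hle2
      simp at hle2
    · exact h1
  set c₀ : ℝ := sInf Acon with hc₀def
  have hc₀mem : μ {x | hstar x ≤ c₀} = 1 := by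
    have h1n : ∀ n : ℕ, μ {x | hstar x ≤ c₀ + 1/(n+1)} = 1 := by
      intro n
      have hpos : (0:ℝ) < 1/(n+1) := by positivity
      have hlt : sInf Acon < c₀ + 1/(n+1) := by rw [← hc₀def]; linarith
      obtain ⟨r, hrA, hrlt⟩ := exists_lt_of_csInf_lt ⟨C, hCin⟩ hlt
      exact hmono r _ hrA hrlt.le
    have hint : {x | hstar x ≤ c₀} = ⋂ n : ℕ, {x | hstar x ≤ c₀ + 1/(n+1)} := by
      ext x
      simp only [Set.mem_iInter, Set.mem_setOf_eq]
      constructor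
      · intro hx n
        have : (0:ℝ) < 1/(n+1) := by positivity
        linarith
      · intro hx
        by_contra hlt
        push_neg at hlt
        obtain ⟨n, hn⟩ := exists_nat_one_div_lt (sub_pos.2 hlt)
        have := hx n
        linarith
    rw [hint]
    rw [← prob_compl_eq_zero_iff]
    · rw [Set.compl_iInter]
      refine measure_iUnion_null fun n => ?_
      rw [prob_compl_eq_zero_iff]
      · exact h1n n
      · exact measurableSet_le hstar_meas measurable_const
    · exact MeasurableSet.iInter fun n => measurableSet_le hstar_meas measurable_const
  have hlt0 : μ {x | hstar x < c₀} = 0 := by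
    have hun : {x | hstar x < c₀} = ⋃ n : ℕ, {x | hstar x ≤ c₀ - 1/(n+1)} := by
      ext x
      simp only [Set.mem_iUnion, Set.mem_setOf_eq]
      constructor
      · intro hx
        obtain ⟨n, hn⟩ := exists_nat_one_div_lt (sub_pos.2 hx)
        exact ⟨n, by linarith⟩
      · intro ⟨n, hn⟩
        have : (0:ℝ) < 1/(n+1) := by positivity
        linarith
    rw [hun]
    refine measure_iUnion_null fun n => ?_
    rcases hkey (c₀ - 1/(n+1)) with h0 | h1
    · exact h0
    · exfalso
      have hmem : (c₀ - 1/(n+1)) ∈ Acon := h1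
      have := csInf_le hAbdd hmem
      rw [← hc₀def] at this
      have hpos : (0:ℝ) < 1/(n+1) := by positivity
      linarith
  have hconst : hstar =ᵐ[μ] fun _ => c₀ := by
    have hle : ∀ᵐ x ∂μ, hstar x ≤ c₀ := by
      have hcompl : μ {x | hstar x ≤ c₀}ᶜ = 0 :=
        (prob_compl_eq_zero_iff (measurableSet_le hstar_meas measurable_const)).2 hc₀mem
      exact ae_iff.2 hcompl
    have hge : ∀ᵐ x ∂μ, ¬ hstar x < c₀ := ae_iff.2 (by simpa using hlt0)
    filter_upwards [hle, hge] with x hx1 hx2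
    exact le_antisymm hx1 (not_lt.1 hx2)
  -- conclusion
  have hhc : h =ᵐ[μ] fun _ => c₀ := hh'eq.symm.trans (hstar_ae.symm.trans hconst)
  have hintf₂ : ∫ x, f₂ x ∂μ = c₀ := by
    have he1 : ∫ x, h x ∂μ = ∫ x, f₂ x ∂μ := integral_condExp hm
    have he2 : ∫ x, h x ∂μ = c₀ := by
      rw [integral_congr_ae hhc]
      simp
    rw [← he1, he2]
  have hf₁sm : StronglyMeasurable[invariantSigma T₁] f₁ := hf₁.stronglyMeasurable
  have hpull : μ[(fun x => f₁ x * f₂ x) | invariantSigma T₁] =ᵐ[μ] fun x => f₁ x * h x := by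
    have := condExp_stronglyMeasurable_mul_of_bound hm hf₁sm hint₂ C₁
      (Eventually.of_forall fun x => by simpa [Real.norm_eq_abs] using hC₁ x)
    exact this
  calc ∫ x, f₁ x * f₂ x ∂μ
      = ∫ x, (μ[(fun x => f₁ x * f₂ x) | invariantSigma T₁]) x ∂μ :=
        (integral_condExp hm).symm
    _ = ∫ x, f₁ x * h x ∂μ := integral_congr_ae hpull
    _ = ∫ x, f₁ x * c₀ ∂μ := by
        refine integral_congr_ae ?_
        filter_upwards [hhc] with x hx
        rw [hx]
    _ = (∫ x, f₁ x ∂μ) * c₀ := by rw [integral_mul_const]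
    _ = (∫ x, f₁ x ∂μ) * (∫ x, f₂ x ∂μ) := by rw [hintf₂]
end

section
/- Consider Y = {0,1,2}^G with the (1/3,1/3,1/3)-Bernoulli measure ν, for a countable group G, with the right shift (R^g y)_h = y_{hg} and left shift (L^g y)_h = y_{g⁻¹h}. Define X = Y³ with μ = ν×ν×ν, T₁ = R×Id×R, T₂ = L×R×Id. Let f(i,j,k) = 1 if i,j,k are pairwise distinct and 0 otherwise, F(y,z,w) = f(y_e, z_e, w_e), and A = {F = 1}. Then μ(A) = 6/27, and for every g ≠ e, μ(A ∩ T₁^g A ∩ T₁^g T₂^g A) = 6/729. -/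
open MeasureTheory

/-- The right Bernoulli shift `(R^g y)_h = y_{hg}`. -/
def rightShift {G : Type*} [Group G] (g : G) (y : G → Fin 3) : G → Fin 3 :=
  fun h => y (h * g)

/-- The left Bernoulli shift `(L^g y)_h = y_{g⁻¹ h}`. -/
def leftShift {G : Type*} [Group G] (g : G) (y : G → Fin 3) : G → Fin 3 :=
  fun h => y (g⁻¹ * h)

lemma measure_preimage_finset {α β : Type*} [MeasurableSpace α] [MeasurableSpace β]
    [MeasurableSingletonClass β] (μ : Measure α) {f : α → β} (hf : Measurable f)
    (D : Finset β) : μ (f ⁻¹' ↑D) = ∑ c ∈ D, μ (f ⁻¹' {c}) := by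
  have h : f ⁻¹' ↑D = ⋃ c ∈ D, f ⁻¹' {c} := by ext x; simp
  rw [h, measure_biUnion_finset]
  · intro i _ j _ hij
    exact Set.disjoint_left.mpr fun x hx hx' => hij (by
      simp only [Set.mem_preimage, Set.mem_singleton_iff] at hx hx'
      rw [← hx, ← hx'])
  · exact fun c _ => hf (measurableSet_singleton c)

/-- On `X = Y³` with `Y = {0,1,2}^G` carrying the `(1/3,1/3,1/3)`-Bernoulli measure
`ν`, with `T₁ = R × Id × R` and `T₂ = L × R × Id`, and `A` the set where the three
coordinates at the identity are pairwise distinct, one has `μ(A) = 6/27` and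
`μ(A ∩ T₁^g A ∩ T₁^g T₂^g A) = 6/729` for every `g ≠ e`. -/
theorem bernoulli_small_correlation {G : Type*} [Group G] [Countable G]
    (ν : Measure (G → Fin 3)) [IsProbabilityMeasure ν]
    (hcyl : ∀ (s : Finset G) (c : G → Fin 3),
      ν {y : G → Fin 3 | ∀ g ∈ s, y g = c g} = (1 / 3 : ENNReal) ^ s.card)
    (hmeas1 : ∀ g : G, Measurable (rightShift g)) (hmeas2 : ∀ g : G, Measurable (leftShift g))
    (μ : Measure ((G → Fin 3) × (G → Fin 3) × (G → Fin 3)))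
    (hμ : μ = ν.prod (ν.prod ν))
    (T₁ T₂ : G → ((G → Fin 3) × (G → Fin 3) × (G → Fin 3)) →
      ((G → Fin 3) × (G → Fin 3) × (G → Fin 3)))
    (hT₁ : ∀ g p, T₁ g p = (rightShift g p.1, p.2.1, rightShift g p.2.2))
    (hT₂ : ∀ g p, T₂ g p = (leftShift g p.1, rightShift g p.2.1, p.2.2))
    (A : Set ((G → Fin 3) × (G → Fin 3) × (G → Fin 3)))
    (hA : A = {p | p.1 1 ≠ p.2.1 1 ∧ p.2.1 1 ≠ p.2.2 1 ∧ p.1 1 ≠ p.2.2 1}) :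
    μ A = 6 / 27 ∧
    ∀ g : G, g ≠ 1 →
      μ (A ∩ (T₁ g '' A) ∩ ((fun p => T₁ g (T₂ g p)) '' A)) = 6 / 729 := by
  classical
  have hν1 : ∀ a : Fin 3, ν {y : G → Fin 3 | y 1 = a} = 1/3 := by
    intro a
    have h := hcyl {1} (fun _ => a)
    simpa using h
  constructor
  · -- first part
    set φ : ((G → Fin 3) × (G → Fin 3) × (G → Fin 3)) → Fin 3 × Fin 3 × Fin 3 :=
      fun p => (p.1 1, p.2.1 1, p.2.2 1) with hφ
    have hφm : Measurable φ := by fun_prop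
    have hA1 : A = φ ⁻¹' ↑(Finset.univ.filter
        (fun c : Fin 3 × Fin 3 × Fin 3 => c.1 ≠ c.2.1 ∧ c.2.1 ≠ c.2.2 ∧ c.1 ≠ c.2.2)) := by
      ext p; simp [hA, hφ]
    have hfib : ∀ c : Fin 3 × Fin 3 × Fin 3, μ (φ ⁻¹' {c}) = 1/3 * (1/3 * (1/3)) := by
      intro c
      have hset : φ ⁻¹' {c} = {y : G → Fin 3 | y 1 = c.1} ×ˢ
          ({y : G → Fin 3 | y 1 = c.2.1} ×ˢ {y : G → Fin 3 | y 1 = c.2.2}) := by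
        ext p; simp [hφ, Set.mem_prod, Prod.ext_iff]
      rw [hμ, hset, Measure.prod_prod, Measure.prod_prod, hν1, hν1, hν1]
    rw [hA1, measure_preimage_finset μ hφm,
      Finset.sum_congr rfl (fun c _ => hfib c), Finset.sum_const,
      show (Finset.univ.filter
        (fun c : Fin 3 × Fin 3 × Fin 3 => c.1 ≠ c.2.1 ∧ c.2.1 ≠ c.2.2 ∧ c.1 ≠ c.2.2)).card = 6
        by decide]
    rw [nsmul_eq_mul, show (1/3*(1/3*(1/3)):ENNReal) = 1/27 by
      rw [show (1/3*(1/3*(1/3)):ENNReal) = (1/3)^3 by rw [pow_succ, pow_succ, pow_one, mul_assoc],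
        one_div, ← ENNReal.inv_pow]
      norm_num, one_div, ← div_eq_mul_inv]
    norm_num
  · -- second part
    intro g hg
    have hg' : (g⁻¹ : G) ≠ 1 := inv_ne_one.mpr hg
    have hν2 : ∀ a b : Fin 3, ν {y : G → Fin 3 | y 1 = a ∧ y g⁻¹ = b} = (1/3)^2 := by
      intro a b
      have h := hcyl {1, g⁻¹} (fun h => if h = 1 then a else b)
      have hcard : ({1, g⁻¹} : Finset G).card = 2 := by
        rw [Finset.card_insert_of_notMem (by simpa using hg'.symm), Finset.card_singleton]
      rw [hcard] at h
      rw [← h]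
      congr 1
      ext y
      simp only [Finset.mem_insert, Finset.mem_singleton, Set.mem_setOf_eq]
      constructor
      · rintro ⟨h1, h2⟩ x hx
        rcases hx with rfl | rfl
        · simpa using h1
        · simpa [hg, hg'] using h2
      · intro hy
        refine ⟨?_, ?_⟩
        · simpa using hy 1 (Or.inl rfl)
        · have := hy g⁻¹ (Or.inr rfl)
          simpa [hg, hg'] using this
    -- shift inverses
    have hRR : ∀ y : G → Fin 3, rightShift g (rightShift g⁻¹ y) = y := by
      intro y; funext h; simp [rightShift, mul_assoc]
    have hLL : ∀ y : G → Fin 3, leftShift g (leftShift g⁻¹ y) = y := by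
      intro y; funext h; simp [leftShift, ← mul_assoc]
    -- image characterizations
    have himg1 : T₁ g '' A = {p : (G → Fin 3) × (G → Fin 3) × (G → Fin 3) |
        p.1 g⁻¹ ≠ p.2.1 1 ∧ p.2.1 1 ≠ p.2.2 g⁻¹ ∧ p.1 g⁻¹ ≠ p.2.2 g⁻¹} := by
      ext p
      constructor
      · rintro ⟨q, hq, rfl⟩
        rw [hA] at hq
        simpa [hT₁, rightShift] using hq
      · intro hp
        refine ⟨(rightShift g⁻¹ p.1, p.2.1, rightShift g⁻¹ p.2.2), ?_, ?_⟩
        · rw [hA]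
          simpa [rightShift] using hp
        · rw [hT₁]
          simp [hRR]
    have himg2 : (fun p => T₁ g (T₂ g p)) '' A =
        {p : (G → Fin 3) × (G → Fin 3) × (G → Fin 3) |
        p.1 1 ≠ p.2.1 g⁻¹ ∧ p.2.1 g⁻¹ ≠ p.2.2 g⁻¹ ∧ p.1 1 ≠ p.2.2 g⁻¹} := by
      ext p
      constructor
      · rintro ⟨q, hq, rfl⟩
        rw [hA] at hq
        simpa [hT₁, hT₂, rightShift, leftShift] using hq
      · intro hp
        refine ⟨(leftShift g⁻¹ (rightShift g⁻¹ p.1), rightShift g⁻¹ p.2.1,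
            rightShift g⁻¹ p.2.2), ?_, ?_⟩
        · rw [hA]
          simpa [rightShift, leftShift] using hp
        · show T₁ g (T₂ g _) = p
          rw [hT₂, hT₁]
          simp [hRR, hLL]
    set ψ : ((G → Fin 3) × (G → Fin 3) × (G → Fin 3)) →
        (Fin 3 × Fin 3) × (Fin 3 × Fin 3) × (Fin 3 × Fin 3) :=
      fun p => ((p.1 1, p.1 g⁻¹), (p.2.1 1, p.2.1 g⁻¹), (p.2.2 1, p.2.2 g⁻¹)) with hψ
    have hψm : Measurable ψ := by fun_prop
    have hset : A ∩ (T₁ g '' A) ∩ ((fun p => T₁ g (T₂ g p)) '' A)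
        = ψ ⁻¹' ↑(Finset.univ.filter
          (fun c : (Fin 3 × Fin 3) × (Fin 3 × Fin 3) × (Fin 3 × Fin 3) =>
            (c.1.1 ≠ c.2.1.1 ∧ c.2.1.1 ≠ c.2.2.1 ∧ c.1.1 ≠ c.2.2.1) ∧
            (c.1.2 ≠ c.2.1.1 ∧ c.2.1.1 ≠ c.2.2.2 ∧ c.1.2 ≠ c.2.2.2) ∧
            (c.1.1 ≠ c.2.1.2 ∧ c.2.1.2 ≠ c.2.2.2 ∧ c.1.1 ≠ c.2.2.2))) := by
      rw [himg1, himg2, hA]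
      ext p
      simp [hψ, and_assoc]
    have hfib : ∀ c : (Fin 3 × Fin 3) × (Fin 3 × Fin 3) × (Fin 3 × Fin 3),
        μ (ψ ⁻¹' {c}) = (1/3:ENNReal)^2 * ((1/3)^2 * (1/3)^2) := by
      intro c
      have hs : ψ ⁻¹' {c} = {y : G → Fin 3 | y 1 = c.1.1 ∧ y g⁻¹ = c.1.2} ×ˢ
          ({y : G → Fin 3 | y 1 = c.2.1.1 ∧ y g⁻¹ = c.2.1.2} ×ˢ
           {y : G → Fin 3 | y 1 = c.2.2.1 ∧ y g⁻¹ = c.2.2.2}) := by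
        ext p
        simp only [hψ, Set.mem_preimage, Set.mem_singleton_iff, Set.mem_prod,
          Set.mem_setOf_eq, Prod.ext_iff]
      rw [hμ, hs, Measure.prod_prod, Measure.prod_prod, hν2, hν2, hν2]
    rw [hset, measure_preimage_finset μ hψm,
      Finset.sum_congr rfl (fun c _ => hfib c), Finset.sum_const,
      show (Finset.univ.filter
          (fun c : (Fin 3 × Fin 3) × (Fin 3 × Fin 3) × (Fin 3 × Fin 3) =>
            (c.1.1 ≠ c.2.1.1 ∧ c.2.1.1 ≠ c.2.2.1 ∧ c.1.1 ≠ c.2.2.1) ∧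
            (c.1.2 ≠ c.2.1.1 ∧ c.2.1.1 ≠ c.2.2.2 ∧ c.1.2 ≠ c.2.2.2) ∧
            (c.1.1 ≠ c.2.1.2 ∧ c.2.1.2 ≠ c.2.2.2 ∧ c.1.1 ≠ c.2.2.2))).card = 6 by decide]
    rw [nsmul_eq_mul, show ((1/3:ENNReal)^2*((1/3)^2*(1/3)^2)) = 1/729 by
      rw [show ((1/3:ENNReal)^2*((1/3)^2*(1/3)^2)) = (1/3)^6 by
        rw [← pow_add, ← pow_add], one_div, ← ENNReal.inv_pow]
      norm_num, one_div, ← div_eq_mul_inv]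
    norm_num
end
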